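/- arXiv:2603.19853 — 10 statements merged into one kernel-verified Lean document; each statement's English description precedes it below -/
import Mathlib

section
/- Let (s, m₁, m₂) be a solution of the random chemostat system on a maximal interval [0, t_M) with nonnegative initial condition (s₀, m₁₀, m₂₀) ∈ ℝ³₊. Then s(t) ≥ 0, m₁(t) ≥ 0, and m₂(t) ≥ 0 for all t ∈ [0, t_M), i.e., the nonnegative octant ℝ³₊ is positively invariant for the system. -/
open Set Filter Topology

private lemma negpart_sub_le (u v : ℝ) : max (-v) 0 - max (-u) 0 ≤ max (-(v - u)) 0 := by
  have h : max (-v) 0 ≤ max (-(v - u)) 0 + max (-u) 0 := by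
    apply max_le
    · have hv : -v = -(v - u) + -u := by ring
      rw [hv]
      exact add_le_add (le_max_left _ _) (le_max_left _ _)
    · positivity
  linarith

private lemma negpart_slope_eventually {mA mB : ℝ → ℝ} {x dA K₀ αB η : ℝ}
    (hη : 0 < η) (hK₀ : 0 ≤ K₀) (hαB : 0 ≤ αB)
    (hcont : Filter.Tendsto mA (nhdsWithin x (Set.Ioi x)) (nhds (mA x)))
    (hslope : Filter.Tendsto (fun z => (z - x)⁻¹ * (mA z - mA x))
      (nhdsWithin x (Set.Ioi x)) (nhds dA))
    (hdA : mA x ≤ 0 → -dA ≤ K₀ * max (-(mA x)) 0 + αB * max (-(mB x)) 0) :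
    ∀ᶠ z in nhdsWithin x (Set.Ioi x),
      (z - x)⁻¹ * (max (-(mA z)) 0 - max (-(mA x)) 0)
        ≤ K₀ * max (-(mA x)) 0 + αB * max (-(mB x)) 0 + η := by
  have hcA0 : 0 ≤ K₀ * max (-(mA x)) 0 + αB * max (-(mB x)) 0 := by positivity
  rcases le_or_gt (mA x) 0 with hx0 | hx0
  · have h1 : ∀ᶠ z in nhdsWithin x (Set.Ioi x),
        dA - η < (z - x)⁻¹ * (mA z - mA x) :=
      hslope.eventually (eventually_gt_nhds (by linarith))
    have h2 : ∀ᶠ z in nhdsWithin x (Set.Ioi x), z ∈ Set.Ioi x := eventually_mem_nhdsWithin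
    filter_upwards [h1, h2] with z hz1 hz2
    have hzx : (0:ℝ) < z - x := by
      have : x < z := hz2
      linarith
    have key : max (-(mA z)) 0 - max (-(mA x)) 0 ≤ max (-(mA z - mA x)) 0 :=
      negpart_sub_le _ _
    have step1 : (z - x)⁻¹ * (max (-(mA z)) 0 - max (-(mA x)) 0)
        ≤ (z - x)⁻¹ * max (-(mA z - mA x)) 0 :=
      mul_le_mul_of_nonneg_left key (by positivity)
    have heq : (z - x)⁻¹ * max (-(mA z - mA x)) 0
        = max (-((z - x)⁻¹ * (mA z - mA x))) 0 := by
      rw [mul_max_of_nonneg _ _ (by positivity : (0:ℝ) ≤ (z - x)⁻¹), mul_zero, mul_neg]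
    have step2 : max (-((z - x)⁻¹ * (mA z - mA x))) 0 ≤ max (-(dA - η)) 0 :=
      max_le_max (by linarith) le_rfl
    have step3 : max (-(dA - η)) 0 ≤ K₀ * max (-(mA x)) 0 + αB * max (-(mB x)) 0 + η := by
      have := hdA hx0
      apply max_le <;> linarith
    linarith [heq ▸ step1]
  · have h1 : ∀ᶠ z in nhdsWithin x (Set.Ioi x), 0 < mA z :=
      hcont.eventually (eventually_gt_nhds hx0)
    filter_upwards [h1] with z hz
    have e1 : max (-(mA z)) 0 = 0 := max_eq_right (by linarith)
    have e2 : max (-(mA x)) 0 = 0 := max_eq_right (by linarith)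
    rw [e1, e2]
    simp only [sub_zero, sub_self, mul_zero]
    positivity

/-- Abstract Grönwall step: the negative parts of a coupled pair stay zero. -/
private lemma keyGron {m₁ m₂ : ℝ → ℝ} {t₁ b K₀ α₁ α₂ : ℝ}
    (hK₀ : 0 ≤ K₀) (hα₁ : 0 ≤ α₁) (hα₂ : 0 ≤ α₂)
    (hcont1 : ContinuousOn m₁ (Set.Icc t₁ b)) (hcont2 : ContinuousOn m₂ (Set.Icc t₁ b))
    (hx1 : ∀ x ∈ Set.Ico t₁ b, ∃ dA : ℝ,
      Filter.Tendsto m₁ (nhdsWithin x (Set.Ioi x)) (nhds (m₁ x)) ∧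
      Filter.Tendsto (fun z => (z - x)⁻¹ * (m₁ z - m₁ x)) (nhdsWithin x (Set.Ioi x)) (nhds dA) ∧
      (m₁ x ≤ 0 → -dA ≤ K₀ * max (-(m₁ x)) 0 + α₂ * max (-(m₂ x)) 0))
    (hx2 : ∀ x ∈ Set.Ico t₁ b, ∃ dA : ℝ,
      Filter.Tendsto m₂ (nhdsWithin x (Set.Ioi x)) (nhds (m₂ x)) ∧
      Filter.Tendsto (fun z => (z - x)⁻¹ * (m₂ z - m₂ x)) (nhdsWithin x (Set.Ioi x)) (nhds dA) ∧
      (m₂ x ≤ 0 → -dA ≤ K₀ * max (-(m₂ x)) 0 + α₁ * max (-(m₁ x)) 0))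
    (h1 : 0 ≤ m₁ t₁) (h2 : 0 ≤ m₂ t₁) :
    ∀ u ∈ Set.Icc t₁ b, 0 ≤ m₁ u ∧ 0 ≤ m₂ u := by
  obtain ⟨K, hKdef⟩ : ∃ K : ℝ, K = K₀ + α₁ + α₂ := ⟨_, rfl⟩
  have hf' : ∀ x ∈ Set.Ico t₁ b, ∀ rr : ℝ,
      (fun u => K * (max (-(m₁ u)) 0 + max (-(m₂ u)) 0)) x < rr →
      ∃ᶠ z in nhdsWithin x (Set.Ioi x),
        (z - x)⁻¹ * ((max (-(m₁ z)) 0 + max (-(m₂ z)) 0)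
          - (max (-(m₁ x)) 0 + max (-(m₂ x)) 0)) < rr := by
    intro x hx rr hrr
    simp only at hrr
    obtain ⟨d1, hc1, hs1, hb1⟩ := hx1 x hx
    obtain ⟨d2, hc2, hs2, hb2⟩ := hx2 x hx
    obtain ⟨η, hηdef⟩ : ∃ η : ℝ, η = (rr - K * (max (-(m₁ x)) 0 + max (-(m₂ x)) 0)) / 3 :=
      ⟨_, rfl⟩
    have hη : 0 < η := by rw [hηdef]; linarith
    have claim1 := negpart_slope_eventually (mB := m₂) hη hK₀ hα₂ hc1 hs1 hb1
    have claim2 := negpart_slope_eventually (mB := m₁) hη hK₀ hα₁ hc2 hs2 hb2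
    apply Filter.Eventually.frequently
    filter_upwards [claim1, claim2] with z hz1 hz2
    have a1 : 0 ≤ max (-(m₁ x)) 0 := le_max_right _ _
    have a2 : 0 ≤ max (-(m₂ x)) 0 := le_max_right _ _
    have b1 : 0 ≤ α₁ * max (-(m₁ x)) 0 := mul_nonneg hα₁ a1
    have b2 : 0 ≤ α₂ * max (-(m₂ x)) 0 := mul_nonneg hα₂ a2
    have hsplit : (z - x)⁻¹ * ((max (-(m₁ z)) 0 + max (-(m₂ z)) 0)
          - (max (-(m₁ x)) 0 + max (-(m₂ x)) 0))
        = (z - x)⁻¹ * (max (-(m₁ z)) 0 - max (-(m₁ x)) 0)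
          + (z - x)⁻¹ * (max (-(m₂ z)) 0 - max (-(m₂ x)) 0) := by ring
    have hηeq : K * (max (-(m₁ x)) 0 + max (-(m₂ x)) 0) = rr - 3 * η := by
      rw [hηdef]; ring
    rw [hsplit]
    nlinarith [hz1, hz2, hηeq, hKdef, mul_nonneg hα₁ a1, mul_nonneg hα₂ a2]
  have hfcont : ContinuousOn (fun u => max (-(m₁ u)) 0 + max (-(m₂ u)) 0) (Set.Icc t₁ b) :=
    (hcont1.neg.sup continuousOn_const).add (hcont2.neg.sup continuousOn_const)
  have hf0 : max (-(m₁ t₁)) 0 + max (-(m₂ t₁)) 0 ≤ 0 := by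
    rw [max_eq_right (by linarith), max_eq_right (by linarith)]
    norm_num
  have hgron := le_gronwallBound_of_liminf_deriv_right_le
    (f := fun u => max (-(m₁ u)) 0 + max (-(m₂ u)) 0)
    (f' := fun u => K * (max (-(m₁ u)) 0 + max (-(m₂ u)) 0))
    (δ := 0) (K := K) (ε := 0) (a := t₁) (b := b)
    hfcont hf' hf0 (fun x _ => by simp)
  intro u hu
  have hfu : max (-(m₁ u)) 0 + max (-(m₂ u)) 0 ≤ 0 := by
    have := hgron u hu
    rwa [gronwallBound_ε0_δ0] at this
  have a1 : 0 ≤ max (-(m₁ u)) 0 := le_max_right _ _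
  have a2 : 0 ≤ max (-(m₂ u)) 0 := le_max_right _ _
  have l1 : -(m₁ u) ≤ max (-(m₁ u)) 0 := le_max_left _ _
  have l2 : -(m₂ u) ≤ max (-(m₂ u)) 0 := le_max_left _ _
  constructor <;> linarith
set_option maxHeartbeats 1000000 in
/-- The nonnegative octant is positively invariant for the random
chemostat system: any solution on a (maximal) interval `[0, t_M)` starting in `ℝ³₊`
stays in `ℝ³₊`. -/
theorem random_chemostat_positive_invariance
    (D a sIn c g d r α α₁ α₂ r₁ r₂ : ℝ)
    (ha : 0 < a) (hDa : a < D) (hsIn : 0 < sIn) (hc : 0 < c)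
    (hg : 0 < g) (hgc : g ≤ c) (hd : 0 < d) (hr0 : 0 < r) (hr1 : r < 1)
    (hα : 0 < α) (hα₁ : 0 ≤ α₁) (hα₂ : 0 ≤ α₂) (hr₁ : 0 < r₁) (hr₂ : 0 < r₂)
    (φ : ℝ → ℝ) (hφcont : ContinuousOn φ (Set.Ici 0))
    (hφbdd : ∀ t ∈ Set.Ici (0:ℝ), φ t ∈ Set.Icc (-a) a)
    (μ : ℝ → ℝ) (hμC1 : ContDiffOn ℝ 1 μ (Set.Ici 0)) (hμ0 : μ 0 = 0)
    (hμpos : ∀ x : ℝ, 0 < x → 0 < μ x) (hμle : ∀ x : ℝ, 0 ≤ x → μ x ≤ 1)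
    (tM : ℝ) (htM : 0 < tM)
    (s m₁ m₂ : ℝ → ℝ)
    (hsol : ∀ t ∈ (Set.Ico (0:ℝ) tM),
        HasDerivWithinAt s ((D + φ t) * (sIn - α * s t) - c * μ (s t) * (m₁ t + m₂ t) + r * d * m₁ t) (Set.Ico (0:ℝ) tM) t ∧
        HasDerivWithinAt m₁ (m₁ t * (-d - α * (D + φ t) + g * μ (s t) - r₁ * m₁ t - r₂ * m₂ t - α₁) + α₂ * m₂ t) (Set.Ico (0:ℝ) tM) t ∧
        HasDerivWithinAt m₂ (m₂ t * (-d + g * μ (s t) - r₁ * m₁ t - r₂ * m₂ t - α₂) + α₁ * m₁ t) (Set.Ico (0:ℝ) tM) t)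
    (hs₀ : 0 ≤ s 0) (hm₁₀ : 0 ≤ m₁ 0) (hm₂₀ : 0 ≤ m₂ 0) :
    ∀ t ∈ Set.Ico (0:ℝ) tM, 0 ≤ s t ∧ 0 ≤ m₁ t ∧ 0 ≤ m₂ t := by
  intro T hT
  obtain ⟨hT0, hTtM⟩ := hT
  have hscont : ContinuousOn s (Set.Ico 0 tM) := fun t ht => ((hsol t ht).1).continuousWithinAt
  have hm₁cont : ContinuousOn m₁ (Set.Ico 0 tM) := fun t ht => ((hsol t ht).2.1).continuousWithinAt
  have hm₂cont : ContinuousOn m₂ (Set.Ico 0 tM) := fun t ht => ((hsol t ht).2.2).continuousWithinAt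
  have hsub : Set.Icc (0:ℝ) T ⊆ Set.Ico 0 tM := fun u hu => ⟨hu.1, lt_of_le_of_lt hu.2 hTtM⟩
  have hμ01 : ∀ x : ℝ, 0 ≤ x → 0 ≤ μ x ∧ μ x ≤ 1 := by
    intro x hx
    rcases eq_or_lt_of_le hx with h | h
    · rw [← h, hμ0]; exact ⟨le_refl 0, by norm_num⟩
    · exact ⟨(hμpos x h).le, hμle x hx⟩
  obtain ⟨M₁, hM₁⟩ := (isCompact_Icc : IsCompact (Set.Icc (0:ℝ) T)).exists_bound_of_continuousOn
    (hm₁cont.mono hsub)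
  obtain ⟨M₂, hM₂⟩ := (isCompact_Icc : IsCompact (Set.Icc (0:ℝ) T)).exists_bound_of_continuousOn
    (hm₂cont.mono hsub)
  obtain ⟨M, hMdef⟩ : ∃ M : ℝ, M = max M₁ M₂ := ⟨_, rfl⟩
  have hM : ∀ u ∈ Set.Icc (0:ℝ) T, |m₁ u| ≤ M ∧ |m₂ u| ≤ M := by
    intro u hu
    rw [hMdef]
    constructor
    · exact le_trans (by simpa using hM₁ u hu) (le_max_left _ _)
    · exact le_trans (by simpa using hM₂ u hu) (le_max_right _ _)
  have hM0 : 0 ≤ M := le_trans (abs_nonneg _) (hM 0 ⟨le_refl _, hT0⟩).1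
  obtain ⟨K₀, hK₀def⟩ : ∃ K₀ : ℝ, K₀ = d + α * (D + a) + g + r₁ * M + r₂ * M + α₁ + α₂ :=
    ⟨_, rfl⟩
  have hK₀ : 0 ≤ K₀ := by
    have h1 : 0 ≤ α * (D + a) := mul_nonneg hα.le (by linarith)
    have h2 : 0 ≤ r₁ * M := mul_nonneg hr₁.le hM0
    have h3 : 0 ≤ r₂ * M := mul_nonneg hr₂.le hM0
    rw [hK₀def]; linarith
  have hle1 : ∀ x : ℝ, 0 ≤ x → x < tM →
      nhdsWithin x (Set.Ioi x) ≤ nhdsWithin x (Set.Ico 0 tM) := by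
    intro x hx0 hxM
    apply nhdsWithin_le_of_mem
    exact Filter.mem_of_superset (Ioo_mem_nhdsGT_of_mem ⟨le_refl x, hxM⟩)
      (fun z hz => ⟨le_trans hx0 hz.1.le, hz.2⟩)
  have hle2 : ∀ x : ℝ, 0 ≤ x → x < tM →
      nhdsWithin x (Set.Ioi x) ≤ nhdsWithin x (Set.Ico 0 tM \ {x}) := by
    intro x hx0 hxM
    apply nhdsWithin_le_of_mem
    exact Filter.mem_of_superset (Ioo_mem_nhdsGT_of_mem ⟨le_refl x, hxM⟩)
      (fun z hz => ⟨⟨le_trans hx0 hz.1.le, hz.2⟩, fun h => absurd (h ▸ hz.1) (lt_irrefl x)⟩)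
  -- key Gronwall step specialized to our system
  have keyG : ∀ t₁ b : ℝ, 0 ≤ t₁ → t₁ < b → b ≤ T →
      (∀ u ∈ Set.Icc t₁ b, 0 ≤ s u) → 0 ≤ m₁ t₁ → 0 ≤ m₂ t₁ →
      ∀ u ∈ Set.Icc t₁ b, 0 ≤ m₁ u ∧ 0 ≤ m₂ u := by
    intro t₁ b ht₁0 htb hbT hsnn hm₁t₁ hm₂t₁
    have hsubIcc : Set.Icc t₁ b ⊆ Set.Icc (0:ℝ) T :=
      fun u hu => ⟨le_trans ht₁0 hu.1, le_trans hu.2 hbT⟩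
    have hsubIco : Set.Icc t₁ b ⊆ Set.Ico 0 tM := fun u hu => hsub (hsubIcc hu)
    refine keyGron hK₀ hα₁ hα₂ (hm₁cont.mono hsubIco) (hm₂cont.mono hsubIco)
      ?_ ?_ hm₁t₁ hm₂t₁
    · -- m₁ component
      intro x hx
      have hxIcc : x ∈ Set.Icc t₁ b := ⟨hx.1, hx.2.le⟩
      have hxT : x ∈ Set.Icc (0:ℝ) T := hsubIcc hxIcc
      have hxM : x ∈ Set.Ico (0:ℝ) tM := hsubIco hxIcc
      have hsx : 0 ≤ s x := hsnn x hxIcc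
      have hμsx := hμ01 (s x) hsx
      have hφx := hφbdd x hxT.1
      obtain ⟨hm1M, hm2M⟩ := hM x hxT
      rw [abs_le] at hm1M hm2M
      refine ⟨m₁ x * (-d - α * (D + φ x) + g * μ (s x) - r₁ * m₁ x - r₂ * m₂ x - α₁)
          + α₂ * m₂ x, (hm₁cont x hxM).mono_left (hle1 x hxT.1 hxM.2), ?_, ?_⟩
      · have := (hasDerivWithinAt_iff_tendsto_slope.mp (hsol x hxM).2.1).mono_left
          (hle2 x hxT.1 hxM.2)
        refine this.congr (fun z => ?_)
        rw [slope_def_field, div_eq_inv_mul]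
      · intro hx0
        have hmax1 : max (-(m₁ x)) 0 = -(m₁ x) := max_eq_left (by linarith)
        have hC : (-d - α * (D + φ x) + g * μ (s x) - r₁ * m₁ x - r₂ * m₂ x - α₁) ≤ K₀ := by
          have e1 : g * μ (s x) ≤ g * 1 := mul_le_mul_of_nonneg_left hμsx.2 hg.le
          have e2 : r₁ * (-(m₁ x)) ≤ r₁ * M :=
            mul_le_mul_of_nonneg_left (by linarith [hm1M.1]) hr₁.le
          have e3 : r₂ * (-(m₂ x)) ≤ r₂ * M :=
            mul_le_mul_of_nonneg_left (by linarith [hm2M.1]) hr₂.le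
          have e4 : 0 ≤ α * (D + φ x) := mul_nonneg hα.le (by linarith [hφx.1])
          have e5 : 0 ≤ α * (D + a) := mul_nonneg hα.le (by linarith)
          rw [hK₀def]
          linarith
        have e6 : (-(m₁ x)) * (-d - α * (D + φ x) + g * μ (s x) - r₁ * m₁ x - r₂ * m₂ x - α₁)
            ≤ (-(m₁ x)) * K₀ := mul_le_mul_of_nonneg_left hC (by linarith)
        have e7 : α₂ * (-(m₂ x)) ≤ α₂ * max (-(m₂ x)) 0 :=
          mul_le_mul_of_nonneg_left (le_max_left _ _) hα₂
        rw [hmax1]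
        linarith
    · -- m₂ component
      intro x hx
      have hxIcc : x ∈ Set.Icc t₁ b := ⟨hx.1, hx.2.le⟩
      have hxT : x ∈ Set.Icc (0:ℝ) T := hsubIcc hxIcc
      have hxM : x ∈ Set.Ico (0:ℝ) tM := hsubIco hxIcc
      have hsx : 0 ≤ s x := hsnn x hxIcc
      have hμsx := hμ01 (s x) hsx
      obtain ⟨hm1M, hm2M⟩ := hM x hxT
      rw [abs_le] at hm1M hm2M
      refine ⟨m₂ x * (-d + g * μ (s x) - r₁ * m₁ x - r₂ * m₂ x - α₂) + α₁ * m₁ x,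
        (hm₂cont x hxM).mono_left (hle1 x hxT.1 hxM.2), ?_, ?_⟩
      · have := (hasDerivWithinAt_iff_tendsto_slope.mp (hsol x hxM).2.2).mono_left
          (hle2 x hxT.1 hxM.2)
        refine this.congr (fun z => ?_)
        rw [slope_def_field, div_eq_inv_mul]
      · intro hx0
        have hmax2 : max (-(m₂ x)) 0 = -(m₂ x) := max_eq_left (by linarith)
        have hC : (-d + g * μ (s x) - r₁ * m₁ x - r₂ * m₂ x - α₂) ≤ K₀ := by
          have e1 : g * μ (s x) ≤ g * 1 := mul_le_mul_of_nonneg_left hμsx.2 hg.le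
          have e2 : r₁ * (-(m₁ x)) ≤ r₁ * M :=
            mul_le_mul_of_nonneg_left (by linarith [hm1M.1]) hr₁.le
          have e3 : r₂ * (-(m₂ x)) ≤ r₂ * M :=
            mul_le_mul_of_nonneg_left (by linarith [hm2M.1]) hr₂.le
          have e5 : 0 ≤ α * (D + a) := mul_nonneg hα.le (by linarith)
          rw [hK₀def]
          linarith
        have e6 : (-(m₂ x)) * (-d + g * μ (s x) - r₁ * m₁ x - r₂ * m₂ x - α₂)
            ≤ (-(m₂ x)) * K₀ := mul_le_mul_of_nonneg_left hC (by linarith)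
        have e7 : α₁ * (-(m₁ x)) ≤ α₁ * max (-(m₁ x)) 0 :=
          mul_le_mul_of_nonneg_left (le_max_left _ _) hα₁
        rw [hmax2]
        linarith
  -- first-exit-time argument on `[0, T]`
  obtain ⟨A, hAdef⟩ : ∃ A : Set ℝ, A = {t₂ | t₂ ∈ Set.Icc (0:ℝ) T ∧
      ∀ u ∈ Set.Icc (0:ℝ) t₂, 0 ≤ s u ∧ 0 ≤ m₁ u ∧ 0 ≤ m₂ u} := ⟨_, rfl⟩
  have hAmem : ∀ t₂, t₂ ∈ A ↔ (t₂ ∈ Set.Icc (0:ℝ) T ∧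
      ∀ u ∈ Set.Icc (0:ℝ) t₂, 0 ≤ s u ∧ 0 ≤ m₁ u ∧ 0 ≤ m₂ u) := by
    intro t₂; rw [hAdef]; exact Iff.rfl
  have h0A : (0:ℝ) ∈ A := by
    rw [hAmem]
    refine ⟨⟨le_refl _, hT0⟩, fun u hu => ?_⟩
    have : u = 0 := le_antisymm hu.2 hu.1
    rw [this]; exact ⟨hs₀, hm₁₀, hm₂₀⟩
  have hbddA : BddAbove A := ⟨T, fun t ht => ((hAmem t).mp ht).1.2⟩
  obtain ⟨t₁, ht₁def⟩ : ∃ t₁ : ℝ, t₁ = sSup A := ⟨_, rfl⟩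
  have ht₁mem : t₁ ∈ Set.Icc (0:ℝ) T := by
    rw [ht₁def]
    exact ⟨le_csSup hbddA h0A, csSup_le ⟨0, h0A⟩ (fun t ht => ((hAmem t).mp ht).1.2)⟩
  have ht₁tM : t₁ < tM := lt_of_le_of_lt ht₁mem.2 hTtM
  have hltP : ∀ u, 0 ≤ u → u < t₁ → 0 ≤ s u ∧ 0 ≤ m₁ u ∧ 0 ≤ m₂ u := by
    intro u hu0 hu
    rw [ht₁def] at hu
    obtain ⟨t₂, ht₂A, ht₂⟩ := exists_lt_of_lt_csSup ⟨0, h0A⟩ hu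
    exact ((hAmem t₂).mp ht₂A).2 u ⟨hu0, ht₂.le⟩
  have hPt₁ : 0 ≤ s t₁ ∧ 0 ≤ m₁ t₁ ∧ 0 ≤ m₂ t₁ := by
    rcases eq_or_lt_of_le ht₁mem.1 with h0 | h0
    · rw [← h0]; exact ⟨hs₀, hm₁₀, hm₂₀⟩
    · have hlef : nhdsWithin t₁ (Set.Iio t₁) ≤ nhdsWithin t₁ (Set.Ico 0 tM) := by
        apply nhdsWithin_le_of_mem
        exact Filter.mem_of_superset (Ioo_mem_nhdsLT_of_mem ⟨h0, le_refl t₁⟩)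
          (fun z hz => ⟨hz.1.le, lt_trans hz.2 ht₁tM⟩)
      have hev : ∀ᶠ u in nhdsWithin t₁ (Set.Iio t₁),
          0 ≤ s u ∧ 0 ≤ m₁ u ∧ 0 ≤ m₂ u := by
        have hmem : Set.Ioo (0:ℝ) t₁ ∈ nhdsWithin t₁ (Set.Iio t₁) :=
          Ioo_mem_nhdsLT_of_mem ⟨h0, le_refl t₁⟩
        filter_upwards [hmem] with u hu
        exact hltP u hu.1.le hu.2
      have ht₁Ico : t₁ ∈ Set.Ico (0:ℝ) tM := ⟨ht₁mem.1, ht₁tM⟩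
      exact ⟨ge_of_tendsto ((hscont t₁ ht₁Ico).mono_left hlef) (hev.mono fun u hu => hu.1),
        ge_of_tendsto ((hm₁cont t₁ ht₁Ico).mono_left hlef) (hev.mono fun u hu => hu.2.1),
        ge_of_tendsto ((hm₂cont t₁ ht₁Ico).mono_left hlef) (hev.mono fun u hu => hu.2.2)⟩
  have ht₁A : ∀ u ∈ Set.Icc (0:ℝ) t₁, 0 ≤ s u ∧ 0 ≤ m₁ u ∧ 0 ≤ m₂ u := by
    intro u hu
    rcases eq_or_lt_of_le hu.2 with h | h
    · rw [h]; exact hPt₁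
    · exact hltP u hu.1 h
  rcases eq_or_lt_of_le ht₁mem.2 with hEq | hltT
  · exact ht₁A T ⟨hT0, hEq.ge⟩
  · exfalso
    have ht₁Ico : t₁ ∈ Set.Ico (0:ℝ) tM := ⟨ht₁mem.1, ht₁tM⟩
    have hsb : ∃ b, t₁ < b ∧ b ≤ T ∧ ∀ u ∈ Set.Icc t₁ b, 0 ≤ s u := by
      rcases eq_or_lt_of_le hPt₁.1 with hs0 | hs0
      · -- s t₁ = 0 : strictly positive derivative at t₁
        have hst₁ : s t₁ = 0 := hs0.symm
        have hφt₁ := hφbdd t₁ ht₁mem.1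
        have hdvpos : 0 < (D + φ t₁) * (sIn - α * s t₁)
            - c * μ (s t₁) * (m₁ t₁ + m₂ t₁) + r * d * m₁ t₁ := by
          rw [hst₁, hμ0]
          have h1 : 0 < (D + φ t₁) * sIn := mul_pos (by linarith [hφt₁.1]) hsIn
          have h2 : 0 ≤ r * d * m₁ t₁ := mul_nonneg (mul_nonneg hr0.le hd.le) hPt₁.2.1
          have h3 : (D + φ t₁) * (sIn - α * 0) = (D + φ t₁) * sIn := by ring
          rw [h3]
          linarith
        have hslopeT : Filter.Tendsto (fun z => (s z - s t₁) / (z - t₁))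
            (nhdsWithin t₁ (Set.Ioi t₁))
            (nhds ((D + φ t₁) * (sIn - α * s t₁)
              - c * μ (s t₁) * (m₁ t₁ + m₂ t₁) + r * d * m₁ t₁)) := by
          have := (hasDerivWithinAt_iff_tendsto_slope.mp
            (hsol t₁ ht₁Ico).1).mono_left (hle2 t₁ ht₁mem.1 ht₁tM)
          refine this.congr (fun z => ?_)
          rw [slope_def_field]
        have hev : ∀ᶠ z in nhdsWithin t₁ (Set.Ioi t₁), 0 < (s z - s t₁) / (z - t₁) :=
          hslopeT.eventually (eventually_gt_nhds hdvpos)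
        rw [Filter.eventually_iff, Metric.mem_nhdsWithin_iff] at hev
        obtain ⟨ε, hε, hevball⟩ := hev
        refine ⟨min (t₁ + ε / 2) T, lt_min (by linarith) hltT, min_le_right _ _, ?_⟩
        intro u hu
        rcases eq_or_lt_of_le hu.1 with h | h
        · rw [← h, hst₁]
        · have hu2 : u ≤ t₁ + ε / 2 := le_trans hu.2 (min_le_left _ _)
          have hdist : dist u t₁ < ε := by
            rw [Real.dist_eq, abs_of_pos (by linarith : 0 < u - t₁)]
            linarith
          have hq : 0 < (s u - s t₁) / (u - t₁) :=
            hevball ⟨Metric.mem_ball.mpr hdist, h⟩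
          have huz : 0 < u - t₁ := by linarith
          rw [hst₁, sub_zero] at hq
          rcases div_pos_iff.mp hq with ⟨h1, _⟩ | ⟨_, h2⟩
          · exact h1.le
          · linarith
      · -- s t₁ > 0 : continuity
        have hev : ∀ᶠ z in nhdsWithin t₁ (Set.Ico 0 tM), 0 < s z :=
          (hscont t₁ ht₁Ico).eventually (eventually_gt_nhds hs0)
        rw [Filter.eventually_iff, Metric.mem_nhdsWithin_iff] at hev
        obtain ⟨ε, hε, hevball⟩ := hev
        refine ⟨min (t₁ + ε / 2) T, lt_min (by linarith) hltT, min_le_right _ _, ?_⟩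
        intro u hu
        have hu2 : u ≤ t₁ + ε / 2 := le_trans hu.2 (min_le_left _ _)
        have huIco : u ∈ Set.Ico (0:ℝ) tM :=
          ⟨le_trans ht₁mem.1 hu.1, lt_of_le_of_lt (le_trans hu.2 (min_le_right _ _)) hTtM⟩
        have hdist : dist u t₁ < ε := by
          rw [Real.dist_eq, abs_of_nonneg (by linarith [hu.1] : 0 ≤ u - t₁)]
          linarith
        exact (hevball ⟨Metric.mem_ball.mpr hdist, huIco⟩ : 0 < s u).le
    obtain ⟨b, hb1, hb2, hb3⟩ := hsb
    have hmres := keyG t₁ b ht₁mem.1 hb1 hb2 hb3 hPt₁.2.1 hPt₁.2.2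
    have hbA : b ∈ A := by
      rw [hAmem]
      refine ⟨⟨le_trans ht₁mem.1 hb1.le, hb2⟩, fun u hu => ?_⟩
      rcases le_or_gt u t₁ with h | h
      · exact ht₁A u ⟨hu.1, h⟩
      · obtain ⟨hm1, hm2⟩ := hmres u ⟨h.le, hu.2⟩
        exact ⟨hb3 u ⟨h.le, hu.2⟩, hm1, hm2⟩
    have : b ≤ t₁ := by rw [ht₁def]; exact le_csSup hbddA hbA
    exact absurd this (not_le.mpr hb1)
end

section
/- Let (s, m₁, m₂) be a solution of the random chemostat system on [0, t_M) with values in ℝ³₊, and set z(t) := g s(t) + c(m₁(t) + m₂(t)). Then z satisfies the differential inequality z'(t) ≤ g(D + φ(t)) s_in + g r d z(t) for all t ∈ [0, t_M); in particular, by Gronwall's inequality, z(t) ≤ z(0) e^{g r d t} + (D_max s_in/(r d))(e^{g r d t} − 1) for all t ∈ [0, t_M), so the solution does not blow up in finite time. -/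
/-- For any nonnegative solution on `[0, t_M)`, the quantity
`z = g·s + c·(m₁ + m₂)` satisfies `z' ≤ g(D + φ(t))·s_in + g·r·d·z`, hence by Gronwall's
inequality `z(t) ≤ z(0)e^{g r d t} + (D_max s_in/(r d))(e^{g r d t} − 1)`; in particular the
solution does not blow up in finite time. -/
theorem random_chemostat_no_blowup
    (D a sIn c g d r α α₁ α₂ r₁ r₂ : ℝ)
    (ha : 0 < a) (hDa : a < D) (hsIn : 0 < sIn) (hc : 0 < c)
    (hg : 0 < g) (hgc : g ≤ c) (hd : 0 < d) (hr0 : 0 < r) (hr1 : r < 1)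
    (hα : 0 < α) (hα₁ : 0 ≤ α₁) (hα₂ : 0 ≤ α₂) (hr₁ : 0 < r₁) (hr₂ : 0 < r₂)
    (φ : ℝ → ℝ) (hφcont : ContinuousOn φ (Set.Ici 0))
    (hφbdd : ∀ t ∈ Set.Ici (0:ℝ), φ t ∈ Set.Icc (-a) a)
    (μ : ℝ → ℝ) (hμC1 : ContDiffOn ℝ 1 μ (Set.Ici 0)) (hμ0 : μ 0 = 0)
    (hμpos : ∀ x : ℝ, 0 < x → 0 < μ x) (hμle : ∀ x : ℝ, 0 ≤ x → μ x ≤ 1)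
    (tM : ℝ) (htM : 0 < tM)
    (s m₁ m₂ : ℝ → ℝ)
    (hsol : ∀ t ∈ (Set.Ico (0:ℝ) tM),
        HasDerivWithinAt s ((D + φ t) * (sIn - α * s t) - c * μ (s t) * (m₁ t + m₂ t) + r * d * m₁ t) (Set.Ico (0:ℝ) tM) t ∧
        HasDerivWithinAt m₁ (m₁ t * (-d - α * (D + φ t) + g * μ (s t) - r₁ * m₁ t - r₂ * m₂ t - α₁) + α₂ * m₂ t) (Set.Ico (0:ℝ) tM) t ∧
        HasDerivWithinAt m₂ (m₂ t * (-d + g * μ (s t) - r₁ * m₁ t - r₂ * m₂ t - α₂) + α₁ * m₁ t) (Set.Ico (0:ℝ) tM) t)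
    (hoct : ∀ t ∈ (Set.Ico (0:ℝ) tM), 0 ≤ s t ∧ 0 ≤ m₁ t ∧ 0 ≤ m₂ t) :
    (∀ t ∈ Set.Ico (0:ℝ) tM, ∀ zd : ℝ,
      HasDerivWithinAt (fun τ => g * s τ + c * (m₁ τ + m₂ τ)) zd (Set.Ico (0:ℝ) tM) t →
      zd ≤ g * (D + φ t) * sIn + g * r * d * (g * s t + c * (m₁ t + m₂ t))) ∧
    (∀ t ∈ Set.Ico (0:ℝ) tM,
      g * s t + c * (m₁ t + m₂ t) ≤
        (g * s 0 + c * (m₁ 0 + m₂ 0)) * Real.exp (g * r * d * t) +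
          ((D + a) * sIn / (r * d)) * (Real.exp (g * r * d * t) - 1)) := by
  set z : ℝ → ℝ := fun τ => g * s τ + c * (m₁ τ + m₂ τ) with hz
  set Z : ℝ → ℝ := fun t =>
    g * ((D + φ t) * (sIn - α * s t) - c * μ (s t) * (m₁ t + m₂ t) + r * d * m₁ t) +
    c * ((m₁ t * (-d - α * (D + φ t) + g * μ (s t) - r₁ * m₁ t - r₂ * m₂ t - α₁) + α₂ * m₂ t) +
         (m₂ t * (-d + g * μ (s t) - r₁ * m₁ t - r₂ * m₂ t - α₂) + α₁ * m₁ t)) with hZ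
  have hzderiv : ∀ t ∈ Set.Ico (0:ℝ) tM, HasDerivWithinAt z (Z t) (Set.Ico (0:ℝ) tM) t := by
    intro t ht
    obtain ⟨hs', hm1', hm2'⟩ := hsol t ht
    exact (hs'.const_mul g).add ((hm1'.add hm2').const_mul c)
  have hZle : ∀ t ∈ Set.Ico (0:ℝ) tM,
      Z t ≤ g * (D + φ t) * sIn + g * r * d * z t := by
    intro t ht
    obtain ⟨hs0, hm10, hm20⟩ := hoct t ht
    have hφt := hφbdd t ht.1
    have hDφ : 0 < D + φ t := by
      have := hφt.1; linarith
    have hμs : 0 ≤ μ (s t) := by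
      rcases eq_or_lt_of_le hs0 with h | h
      · rw [← h, hμ0]
      · exact le_of_lt (hμpos _ h)
    have hzt : 0 ≤ z t := by
      have : 0 ≤ g * s t := mul_nonneg hg.le hs0
      have : 0 ≤ c * (m₁ t + m₂ t) := mul_nonneg hc.le (by linarith)
      simp only [hz]; linarith
    have key : Z t = g * (D + φ t) * sIn - g * (D + φ t) * (α * s t)
        + g * r * d * m₁ t - c * d * (m₁ t + m₂ t) - c * α * (D + φ t) * m₁ t
        - c * (r₁ * m₁ t + r₂ * m₂ t) * (m₁ t + m₂ t) := by
      simp only [hZ]; ring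
    rw [key]
    have h1 : 0 ≤ g * (D + φ t) * (α * s t) :=
      mul_nonneg (mul_nonneg hg.le hDφ.le) (mul_nonneg hα.le hs0)
    have h2 : 0 ≤ c * α * (D + φ t) * m₁ t :=
      mul_nonneg (mul_nonneg (mul_nonneg hc.le hα.le) hDφ.le) hm10
    have h3 : 0 ≤ c * (r₁ * m₁ t + r₂ * m₂ t) * (m₁ t + m₂ t) := by
      apply mul_nonneg (mul_nonneg hc.le _) (by linarith)
      have := mul_nonneg hr₁.le hm10
      have := mul_nonneg hr₂.le hm20
      linarith
    have h4 : g * r * d * m₁ t ≤ c * d * (m₁ t + m₂ t) := by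
      have hgr : g * r ≤ c := by nlinarith
      have e1 : 0 ≤ (c - g * r) * d * m₁ t :=
        mul_nonneg (mul_nonneg (sub_nonneg.mpr hgr) hd.le) hm10
      have e2 : 0 ≤ c * d * m₂ t := mul_nonneg (mul_nonneg hc.le hd.le) hm20
      nlinarith [e1, e2]
    have h5 : 0 ≤ g * r * d * z t :=
      mul_nonneg (mul_nonneg (mul_nonneg hg.le hr0.le) hd.le) hzt
    linarith
  constructor
  · intro t ht zd hzd
    have huniq : UniqueDiffOn ℝ (Set.Ico (0:ℝ) tM) := uniqueDiffOn_Ico 0 tM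
    have := (huniq t ht).eq_deriv _ hzd (hzderiv t ht)
    rw [this]
    exact hZle t ht
  · intro t ht
    set K := g * r * d with hK
    have hK0 : 0 < K := by positivity
    set ε := g * (D + a) * sIn with hε
    -- continuity of z on Icc 0 t
    have hIccsub : Set.Icc (0:ℝ) t ⊆ Set.Ico (0:ℝ) tM := fun x hx =>
      ⟨hx.1, lt_of_le_of_lt hx.2 ht.2⟩
    have hcont : ContinuousOn z (Set.Icc 0 t) := fun x hx =>
      ((hzderiv x (hIccsub hx)).continuousWithinAt).mono hIccsub
    have hderivIci : ∀ x ∈ Set.Ico (0:ℝ) t, HasDerivWithinAt z (Z x) (Set.Ici x) x := by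
      intro x hx
      have hx' : x ∈ Set.Ico (0:ℝ) tM := ⟨hx.1, lt_trans hx.2 ht.2⟩
      have h1 : HasDerivWithinAt z (Z x) (Set.Ico x tM) x :=
        (hzderiv x hx').mono (Set.Ico_subset_Ico_left hx.1)
      have h2 : Set.Ici x ∩ Set.Iio tM = Set.Ico x tM := Set.Ici_inter_Iio
      rw [← h2] at h1
      exact (hasDerivWithinAt_inter (Iio_mem_nhds hx'.2)).mp h1
    have hbound : ∀ x ∈ Set.Ico (0:ℝ) t, Z x ≤ K * z x + ε := by
      intro x hx
      have hx' : x ∈ Set.Ico (0:ℝ) tM := ⟨hx.1, lt_trans hx.2 ht.2⟩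
      have h1 := hZle x hx'
      have hφx := (hφbdd x hx.1).2
      have : g * (D + φ x) * sIn ≤ ε := by
        have h := mul_le_mul_of_nonneg_left (show D + φ x ≤ D + a by linarith)
          (mul_nonneg hg.le hsIn.le)
        simp only [hε]; nlinarith [h]
      linarith
    have hmain := le_gronwallBound_of_liminf_deriv_right_le hcont
      (fun x hx r hr => (hderivIci x hx).liminf_right_slope_le hr)
      (le_refl (z 0)) hbound t (Set.right_mem_Icc.mpr ht.1)
    rw [gronwallBound_of_K_ne_0 hK0.ne'] at hmain
    simp only [sub_zero] at hmain
    have heq : ε / K = (D + a) * sIn / (r * d) := by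
      rw [hε, hK]
      field_simp
    rw [heq] at hmain
    exact hmain
end

section
/- Assume ϑ := min{α D_min, d + α D_min − g c⁻¹ r d, d} > 0. Let (s, m₁, m₂) be any solution of the random chemostat system on [0, ∞) with values in ℝ³₊ and set z(t) := g s(t) + c(m₁(t) + m₂(t)). Then for all t ≥ 0, z(t) ≤ z(0) e^{−ϑ t} + (g D_max s_in / ϑ)(1 − e^{−ϑ t}). -/
open Set Real

/-- If `ϑ := min{α D_min, d + α D_min − g c⁻¹ r d, d} > 0`, then every
nonnegative global solution satisfies
`z(t) ≤ z(0)e^{−ϑ t} + (g D_max s_in/ϑ)(1 − e^{−ϑ t})` where `z = g·s + c·(m₁ + m₂)`. -/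
theorem random_chemostat_absorbing_estimate
    (D a sIn c g d r α α₁ α₂ r₁ r₂ : ℝ)
    (ha : 0 < a) (hDa : a < D) (hsIn : 0 < sIn) (hc : 0 < c)
    (hg : 0 < g) (hgc : g ≤ c) (hd : 0 < d) (hr0 : 0 < r) (hr1 : r < 1)
    (hα : 0 < α) (hα₁ : 0 ≤ α₁) (hα₂ : 0 ≤ α₂) (hr₁ : 0 < r₁) (hr₂ : 0 < r₂)
    (φ : ℝ → ℝ) (hφcont : ContinuousOn φ (Set.Ici 0))
    (hφbdd : ∀ t ∈ Set.Ici (0:ℝ), φ t ∈ Set.Icc (-a) a)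
    (μ : ℝ → ℝ) (hμC1 : ContDiffOn ℝ 1 μ (Set.Ici 0)) (hμ0 : μ 0 = 0)
    (hμpos : ∀ x : ℝ, 0 < x → 0 < μ x) (hμle : ∀ x : ℝ, 0 ≤ x → μ x ≤ 1)
    (ϑ : ℝ) (hϑdef : ϑ = min (α * (D - a)) (min (d + α * (D - a) - g * c⁻¹ * r * d) d))
    (hϑpos : 0 < ϑ)
    (s m₁ m₂ : ℝ → ℝ)
    (hsol : ∀ t ∈ (Set.Ici (0:ℝ)),
        HasDerivWithinAt s ((D + φ t) * (sIn - α * s t) - c * μ (s t) * (m₁ t + m₂ t) + r * d * m₁ t) (Set.Ici (0:ℝ)) t ∧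
        HasDerivWithinAt m₁ (m₁ t * (-d - α * (D + φ t) + g * μ (s t) - r₁ * m₁ t - r₂ * m₂ t - α₁) + α₂ * m₂ t) (Set.Ici (0:ℝ)) t ∧
        HasDerivWithinAt m₂ (m₂ t * (-d + g * μ (s t) - r₁ * m₁ t - r₂ * m₂ t - α₂) + α₁ * m₁ t) (Set.Ici (0:ℝ)) t)
    (hoct : ∀ t ∈ (Set.Ici (0:ℝ)), 0 ≤ s t ∧ 0 ≤ m₁ t ∧ 0 ≤ m₂ t) :
    ∀ t ∈ Set.Ici (0:ℝ),
      g * s t + c * (m₁ t + m₂ t) ≤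
        (g * s 0 + c * (m₁ 0 + m₂ 0)) * Real.exp (-ϑ * t) +
          (g * (D + a) * sIn / ϑ) * (1 - Real.exp (-ϑ * t)) := by
  intro t ht
  set z : ℝ → ℝ := fun u => g * s u + c * (m₁ u + m₂ u) with hz
  set z' : ℝ → ℝ := fun u =>
      g * ((D + φ u) * (sIn - α * s u) - c * μ (s u) * (m₁ u + m₂ u) + r * d * m₁ u) +
      c * ((m₁ u * (-d - α * (D + φ u) + g * μ (s u) - r₁ * m₁ u - r₂ * m₂ u - α₁) + α₂ * m₂ u) +
           (m₂ u * (-d + g * μ (s u) - r₁ * m₁ u - r₂ * m₂ u - α₂) + α₁ * m₁ u)) with hz'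
  -- derivative of z within Ici 0
  have hderiv : ∀ x ∈ Set.Ici (0:ℝ), HasDerivWithinAt z (z' x) (Set.Ici (0:ℝ)) x := by
    intro x hx
    obtain ⟨h1, h2, h3⟩ := hsol x hx
    exact ((h1.const_mul g).add ((h2.add h3).const_mul c))
  have hcont : ContinuousOn z (Set.Icc 0 t) := by
    have : ContinuousOn z (Set.Ici 0) := fun x hx => (hderiv x hx).continuousWithinAt
    exact this.mono Set.Icc_subset_Ici_self
  have hbound : ∀ x ∈ Set.Ico (0:ℝ) t, z' x ≤ (-ϑ) * z x + g * (D + a) * sIn := by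
    intro x hx
    have hx0 : x ∈ Set.Ici (0:ℝ) := hx.1
    obtain ⟨hφl, hφu⟩ := hφbdd x hx0
    obtain ⟨hs0, hm1, hm2⟩ := hoct x hx0
    have h1 : ϑ ≤ α * (D - a) := hϑdef ▸ min_le_left _ _
    have h2 : ϑ ≤ d + α * (D - a) - g * c⁻¹ * r * d :=
      hϑdef ▸ le_trans (min_le_right _ _) (min_le_left _ _)
    have h3 : ϑ ≤ d := hϑdef ▸ le_trans (min_le_right _ _) (min_le_right _ _)
    have h2' : c * ϑ ≤ c * d + c * α * (D - a) - g * r * d := by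
      have h := mul_le_mul_of_nonneg_left h2 hc.le
      have he : c * (d + α * (D - a) - g * c⁻¹ * r * d)
          = c * d + c * α * (D - a) - g * r * d := by
        field_simp
      linarith [he ▸ h]
    -- pieces
    have p1 : g * ((D + φ x) * sIn) ≤ g * (D + a) * sIn := by nlinarith [mul_pos hg hsIn]
    have p2 : ϑ * (g * s x) ≤ g * (α * ((D + φ x) * s x)) := by
      nlinarith [mul_nonneg (sub_nonneg.2 h1) (mul_nonneg hg.le hs0),
        mul_nonneg (mul_nonneg hα.le (by linarith : (0:ℝ) ≤ φ x + a)) (mul_nonneg hg.le hs0)]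
    have p3 : g * (r * d * m₁ x) + ϑ * (c * m₁ x)
        ≤ c * (d * m₁ x) + c * (α * ((D + φ x) * m₁ x)) := by
      nlinarith [mul_nonneg (sub_nonneg.2 h2') hm1,
        mul_nonneg (mul_nonneg (mul_nonneg hc.le hα.le) (by linarith : (0:ℝ) ≤ φ x + a)) hm1]
    have p4 : ϑ * (c * m₂ x) ≤ c * (d * m₂ x) := by
      nlinarith [mul_nonneg (sub_nonneg.2 h3) (mul_nonneg hc.le hm2)]
    have p5 : 0 ≤ c * ((m₁ x + m₂ x) * (r₁ * m₁ x + r₂ * m₂ x)) := by positivity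
    simp only [hz, hz']
    linarith [p1, p2, p3, p4, p5]
  have hslope : ∀ x ∈ Set.Ico (0:ℝ) t, ∀ ρ, z' x < ρ →
      ∃ᶠ y in nhdsWithin x (Set.Ioi x), (y - x)⁻¹ * (z y - z x) < ρ := by
    intro x hx ρ hρ
    have hd : HasDerivWithinAt z (z' x) (Set.Ici x) x :=
      (hderiv x hx.1).mono (Set.Ici_subset_Ici.2 hx.1)
    have := hd.liminf_right_slope_le hρ
    simpa [slope_def_field, div_eq_inv_mul] using this
  have key := le_gronwallBound_of_liminf_deriv_right_le hcont hslope (le_refl (z 0)) hbound t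
    ⟨ht, le_refl t⟩
  refine key.trans (le_of_eq ?_)
  simp only [gronwallBound_of_K_ne_0 (neg_ne_zero.2 hϑpos.ne'), sub_zero, div_neg]
  ring
end

section
/- Assume ϑ := min{α D_min, d + α D_min − g c⁻¹ r d, d} > 0. For every ε > 0, the compact set B_ε := {(s, m₁, m₂) ∈ ℝ³₊ : g s + c(m₁ + m₂) ≤ g D_max s_in/ϑ + ε} is absorbing for the random chemostat system, uniformly over all admissible noise paths: for every bounded set B ⊂ ℝ³₊ there exists t_B > 0 such that for every continuous φ : [0,∞) → [−a, a] and every initial condition in B, the corresponding solution lies in B_ε for all t ≥ t_B. -/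
open Set Real

/-- Scalar Grönwall helper: slope condition from a right derivative. -/
private lemma slope_cond {f : ℝ → ℝ} {y x r : ℝ}
    (hf : HasDerivWithinAt f y (Set.Ici x) x) (hr : y < r) :
    ∃ᶠ z in nhdsWithin x (Set.Ioi x), (z - x)⁻¹ * (f z - f x) < r := by
  refine (hf.liminf_right_slope_le hr).mono (fun z hz => ?_)
  rwa [slope_def_field, div_eq_inv_mul] at hz

set_option maxHeartbeats 1000000 in
/-- If `ϑ > 0`, then for every `ε > 0` the compact set
`B_ε = {(s,m₁,m₂) ∈ ℝ³₊ : g s + c(m₁+m₂) ≤ g D_max s_in/ϑ + ε}` absorbs every bounded set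
`B ⊂ ℝ³₊`, uniformly over all admissible (continuous, `[−a,a]`-valued) noise paths. -/
theorem random_chemostat_absorbing_set
    (D a sIn c g d r α α₁ α₂ r₁ r₂ : ℝ)
    (ha : 0 < a) (hDa : a < D) (hsIn : 0 < sIn) (hc : 0 < c)
    (hg : 0 < g) (hgc : g ≤ c) (hd : 0 < d) (hr0 : 0 < r) (hr1 : r < 1)
    (hα : 0 < α) (hα₁ : 0 ≤ α₁) (hα₂ : 0 ≤ α₂) (hr₁ : 0 < r₁) (hr₂ : 0 < r₂)
    (μ : ℝ → ℝ) (hμC1 : ContDiffOn ℝ 1 μ (Set.Ici 0)) (hμ0 : μ 0 = 0)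
    (hμpos : ∀ x : ℝ, 0 < x → 0 < μ x) (hμle : ∀ x : ℝ, 0 ≤ x → μ x ≤ 1)
    (ϑ : ℝ) (hϑdef : ϑ = min (α * (D - a)) (min (d + α * (D - a) - g * c⁻¹ * r * d) d))
    (hϑpos : 0 < ϑ)
    (ε : ℝ) (hε : 0 < ε)
    (B : Set (ℝ × ℝ × ℝ)) (hBbdd : Bornology.IsBounded B)
    (hBoct : B ⊆ {p : ℝ × ℝ × ℝ | 0 ≤ p.1 ∧ 0 ≤ p.2.1 ∧ 0 ≤ p.2.2}) :
    ∃ tB : ℝ, 0 < tB ∧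
      ∀ φ : ℝ → ℝ, ContinuousOn φ (Set.Ici 0) →
        (∀ t ∈ Set.Ici (0:ℝ), φ t ∈ Set.Icc (-a) a) →
        ∀ s m₁ m₂ : ℝ → ℝ,
          (∀ t ∈ (Set.Ici (0:ℝ)),
            HasDerivWithinAt s ((D + φ t) * (sIn - α * s t) - c * μ (s t) * (m₁ t + m₂ t) + r * d * m₁ t) (Set.Ici (0:ℝ)) t ∧
            HasDerivWithinAt m₁ (m₁ t * (-d - α * (D + φ t) + g * μ (s t) - r₁ * m₁ t - r₂ * m₂ t - α₁) + α₂ * m₂ t) (Set.Ici (0:ℝ)) t ∧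
            HasDerivWithinAt m₂ (m₂ t * (-d + g * μ (s t) - r₁ * m₁ t - r₂ * m₂ t - α₂) + α₁ * m₁ t) (Set.Ici (0:ℝ)) t) →
          (∀ t ∈ (Set.Ici (0:ℝ)), 0 ≤ s t ∧ 0 ≤ m₁ t ∧ 0 ≤ m₂ t) →
          (s 0, m₁ 0, m₂ 0) ∈ B →
          ∀ t ≥ tB, (0 ≤ s t ∧ 0 ≤ m₁ t ∧ 0 ≤ m₂ t) ∧
            g * s t + c * (m₁ t + m₂ t) ≤ g * (D + a) * sIn / ϑ + ε := by
  obtain ⟨R, hR⟩ := hBbdd.exists_norm_le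
  set M : ℝ := max 1 (g * R + c * (R + R)) with hMdef
  have hM1 : (1:ℝ) ≤ M := le_max_left _ _
  have hM0 : 0 < M := lt_of_lt_of_le one_pos hM1
  set tB : ℝ := max 1 (Real.log (M / ε) / ϑ) with htBdef
  have htB1 : (1:ℝ) ≤ tB := le_max_left _ _
  have htB0 : 0 < tB := lt_of_lt_of_le one_pos htB1
  refine ⟨tB, htB0, ?_⟩
  intro φ hφcont hφmem s m₁ m₂ hode hpos hinit t ht
  have ht0 : (0:ℝ) ≤ t := le_trans (le_trans zero_le_one htB1) ht
  have htmem : t ∈ Set.Ici (0:ℝ) := ht0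
  refine ⟨hpos t htmem, ?_⟩
  -- constants
  have h1 : ϑ ≤ α * (D - a) := hϑdef ▸ min_le_left _ _
  have h2 : ϑ ≤ d + α * (D - a) - g * c⁻¹ * r * d :=
    hϑdef ▸ le_trans (min_le_right _ _) (min_le_left _ _)
  have h3 : ϑ ≤ d := hϑdef ▸ le_trans (min_le_right _ _) (min_le_right _ _)
  have hcc : c * (g * c⁻¹ * r * d) = g * r * d := by field_simp
  have h2' : c * ϑ + g * r * d ≤ c * d + c * (α * (D - a)) := by
    have h := mul_le_mul_of_nonneg_left h2 hc.le
    nlinarith [h, hcc]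
  set C : ℝ := g * (D + a) * sIn with hCdef
  have hC0 : 0 ≤ C := by
    have : (0:ℝ) ≤ D + a := by linarith
    exact mul_nonneg (mul_nonneg hg.le this) hsIn.le
  -- the Lyapunov function
  set f : ℝ → ℝ := fun τ => g * s τ + c * (m₁ τ + m₂ τ) with hfdef
  set f' : ℝ → ℝ := fun τ =>
    g * ((D + φ τ) * (sIn - α * s τ) - c * μ (s τ) * (m₁ τ + m₂ τ) + r * d * m₁ τ)
    + c * ((m₁ τ * (-d - α * (D + φ τ) + g * μ (s τ) - r₁ * m₁ τ - r₂ * m₂ τ - α₁) + α₂ * m₂ τ)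
         + (m₂ τ * (-d + g * μ (s τ) - r₁ * m₁ τ - r₂ * m₂ τ - α₂) + α₁ * m₁ τ)) with hf'def
  have hderiv : ∀ x ∈ Set.Ici (0:ℝ), HasDerivWithinAt f (f' x) (Set.Ici (0:ℝ)) x := by
    intro x hx
    obtain ⟨hs, hm1, hm2⟩ := hode x hx
    exact (hs.const_mul g).add ((hm1.add hm2).const_mul c)
  -- Grönwall
  have hgron : f t ≤ gronwallBound M (-ϑ) C (t - 0) := by
    refine le_gronwallBound_of_liminf_deriv_right_le
      (f := f) (f' := f') (K := -ϑ) (ε := C) (a := 0) (b := t) ?_ ?_ ?_ ?_ t ⟨ht0, le_refl t⟩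
    · intro x hx
      exact ((hderiv x hx.1).continuousWithinAt).mono (fun y hy => hy.1)
    · intro x hx r' hr'
      exact slope_cond ((hderiv x hx.1).mono (Set.Ici_subset_Ici.2 hx.1)) hr'
    · -- f 0 ≤ M
      have h0 := hR _ hinit
      obtain ⟨hs0, hm10, hm20⟩ := hBoct hinit
      have hns : s 0 ≤ R := le_trans (le_trans (le_abs_self _)
        (norm_fst_le ((s 0, m₁ 0, m₂ 0) : ℝ × ℝ × ℝ))) h0
      have hnm1 : m₁ 0 ≤ R := le_trans (le_trans (le_abs_self _)
        (le_trans (norm_fst_le ((m₁ 0, m₂ 0) : ℝ × ℝ))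
          (norm_snd_le ((s 0, m₁ 0, m₂ 0) : ℝ × ℝ × ℝ)))) h0
      have hnm2 : m₂ 0 ≤ R := le_trans (le_trans (le_abs_self _)
        (le_trans (norm_snd_le ((m₁ 0, m₂ 0) : ℝ × ℝ))
          (norm_snd_le ((s 0, m₁ 0, m₂ 0) : ℝ × ℝ × ℝ)))) h0
      have e1 : g * s 0 ≤ g * R := mul_le_mul_of_nonneg_left hns hg.le
      have e2 : c * m₁ 0 ≤ c * R := mul_le_mul_of_nonneg_left hnm1 hc.le
      have e3 : c * m₂ 0 ≤ c * R := mul_le_mul_of_nonneg_left hnm2 hc.le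
      have : g * s 0 + c * (m₁ 0 + m₂ 0) ≤ g * R + c * (R + R) := by linarith
      exact le_trans this (le_max_right _ _)
    · -- differential inequality
      intro x hx
      simp only [hf'def, hfdef, hCdef]
      obtain ⟨hS, hN1, hN2⟩ := hpos x hx.1
      obtain ⟨hPl, hPr⟩ := hφmem x hx.1
      have hDP : α * (D - a) ≤ α * (D + φ x) := by
        have := mul_le_mul_of_nonneg_left hPl hα.le
        nlinarith
      have T1 : g * ((D + φ x) * sIn) ≤ g * ((D + a) * sIn) :=
        mul_le_mul_of_nonneg_left (mul_le_mul_of_nonneg_right (by linarith) hsIn.le) hg.le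
      have T2 : ϑ * (g * s x) ≤ (α * (D + φ x)) * (g * s x) :=
        mul_le_mul_of_nonneg_right (by linarith) (mul_nonneg hg.le hS)
      have hDP2 : c * (α * (D - a)) ≤ c * (α * (D + φ x)) :=
        mul_le_mul_of_nonneg_left hDP hc.le
      have T3 : (c * ϑ + g * r * d) * m₁ x ≤ (c * d + c * (α * (D + φ x))) * m₁ x :=
        mul_le_mul_of_nonneg_right (by linarith) hN1
      have T4 : ϑ * (c * m₂ x) ≤ d * (c * m₂ x) :=
        mul_le_mul_of_nonneg_right h3 (mul_nonneg hc.le hN2)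
      have T5 : 0 ≤ c * ((m₁ x + m₂ x) * (r₁ * m₁ x + r₂ * m₂ x)) := by positivity
      linarith [T1, T2, T3, T4, T5]
  -- unpack the Grönwall bound
  have hϑne : (-ϑ) ≠ 0 := by linarith
  rw [sub_zero, gronwallBound_of_K_ne_0 hϑne] at hgron
  have hE : Real.exp (-ϑ * t) ≤ ε / M := by
    have h1' : -ϑ * t ≤ -ϑ * tB := by nlinarith
    have h2'' : -ϑ * tB ≤ Real.log (ε / M) := by
      have hle : Real.log (M / ε) / ϑ ≤ tB := le_max_right _ _
      have hlog : Real.log (ε / M) = - Real.log (M / ε) := by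
        rw [← Real.log_inv]; congr 1; field_simp
      have hmul := mul_le_mul_of_nonneg_left hle hϑpos.le
      rw [mul_div_cancel₀ _ (ne_of_gt hϑpos)] at hmul
      rw [hlog]; linarith
    calc Real.exp (-ϑ * t) ≤ Real.exp (Real.log (ε / M)) :=
          Real.exp_le_exp.2 (le_trans h1' h2'')
      _ = ε / M := Real.exp_log (div_pos hε hM0)
  have hexp_pos : 0 < Real.exp (-ϑ * t) := Real.exp_pos _
  have key1 : M * Real.exp (-ϑ * t) ≤ ε := by
    calc M * Real.exp (-ϑ * t) ≤ M * (ε / M) := mul_le_mul_of_nonneg_left hE hM0.le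
      _ = ε := by field_simp
  have key2 : C / (-ϑ) * (Real.exp (-ϑ * t) - 1) ≤ C / ϑ := by
    have hdiv : 0 ≤ C / ϑ := div_nonneg hC0 hϑpos.le
    have heq : C / (-ϑ) * (Real.exp (-ϑ * t) - 1) = C / ϑ * (1 - Real.exp (-ϑ * t)) := by
      field_simp; ring
    have hmul := mul_le_mul_of_nonneg_left
      (show 1 - Real.exp (-ϑ * t) ≤ 1 by linarith) hdiv
    rw [heq]; linarith
  have hft : f t ≤ ε + C / ϑ := le_trans hgron (by linarith)
  have hfinal : g * s t + c * (m₁ t + m₂ t) = f t := rfl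
  rw [hfinal, hCdef] at *
  linarith
end

section
/- Assume ϑ := min{α D_min, d + α D_min − g c⁻¹ r d, d} > 0. Then for every solution (s, m₁, m₂) of the random chemostat system on [0, ∞) with values in ℝ³₊, one has limsup_{t→∞} (g s(t) + c(m₁(t) + m₂(t))) ≤ g D_max s_in / ϑ; that is, the deterministic compact set B₀ := {(s, m₁, m₂) ∈ ℝ³₊ : g s + c(m₁ + m₂) ≤ g D_max s_in/ϑ} attracts all solutions. -/
private lemma chemostat_key_ineq
    (D a sIn c g d r α α₁ α₂ r₁ r₂ ϑ φt st m1 m2 μs : ℝ)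
    (hc : 0 < c) (hg : 0 < g) (hsIn : 0 < sIn)
    (hα : 0 < α)
    (hϑ1 : ϑ ≤ α * (D - a)) (hϑ2 : ϑ ≤ d + α * (D - a) - g * c⁻¹ * r * d)
    (hϑ3 : ϑ ≤ d)
    (hφ1 : -a ≤ φt) (hφ2 : φt ≤ a)
    (hs : 0 ≤ st) (hm1 : 0 ≤ m1) (hm2 : 0 ≤ m2)
    (hr₁ : 0 < r₁) (hr₂ : 0 < r₂) :
    g * ((D + φt) * (sIn - α * st) - c * μs * (m1 + m2) + r * d * m1)
      + c * ((m1 * (-d - α * (D + φt) + g * μs - r₁ * m1 - r₂ * m2 - α₁) + α₂ * m2)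
           + (m2 * (-d + g * μs - r₁ * m1 - r₂ * m2 - α₂) + α₁ * m1))
      + ϑ * (g * st + c * (m1 + m2)) - g * (D + a) * sIn ≤ 0 := by
  have hϑ2' : c * ϑ ≤ c * d + c * (α * (D - a)) - g * r * d := by
    have h := mul_le_mul_of_nonneg_left hϑ2 hc.le
    have hcne : c ≠ 0 := hc.ne'
    have : c * (d + α * (D - a) - g * c⁻¹ * r * d)
        = c * d + c * (α * (D - a)) - g * r * d := by
      field_simp
    linarith [this ▸ h]
  have hDφ : α * (D - a) ≤ α * (D + φt) := by nlinarith
  have h1 : 0 ≤ g * st * (α * (D + φt) - ϑ) := by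
    apply mul_nonneg (mul_nonneg hg.le hs); linarith
  have h2 : 0 ≤ m1 * (c * d + c * (α * (D + φt)) - g * r * d - c * ϑ) := by
    apply mul_nonneg hm1; nlinarith
  have h3 : 0 ≤ m2 * (c * d - c * ϑ) := by
    apply mul_nonneg hm2; nlinarith
  have h4 : 0 ≤ g * sIn * (a - φt) := by
    apply mul_nonneg (mul_nonneg hg.le hsIn.le); linarith
  have q1 : 0 ≤ c * r₁ * (m1 * m1) := by positivity
  have q2 : 0 ≤ c * r₂ * (m2 * m2) := by positivity
  have q3 : 0 ≤ c * (r₁ + r₂) * (m1 * m2) := by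
    apply mul_nonneg (by positivity) (mul_nonneg hm1 hm2)
  nlinarith [h1, h2, h3, h4, q1, q2, q3]

/-- If `ϑ > 0`, every nonnegative global solution satisfies
`limsup_{t→∞} (g s(t) + c(m₁(t)+m₂(t))) ≤ g D_max s_in/ϑ`; i.e. the deterministic compact
set `B₀` attracts all solutions. -/
theorem random_chemostat_attracting_set
    (D a sIn c g d r α α₁ α₂ r₁ r₂ : ℝ)
    (ha : 0 < a) (hDa : a < D) (hsIn : 0 < sIn) (hc : 0 < c)
    (hg : 0 < g) (hgc : g ≤ c) (hd : 0 < d) (hr0 : 0 < r) (hr1 : r < 1)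
    (hα : 0 < α) (hα₁ : 0 ≤ α₁) (hα₂ : 0 ≤ α₂) (hr₁ : 0 < r₁) (hr₂ : 0 < r₂)
    (φ : ℝ → ℝ) (hφcont : ContinuousOn φ (Set.Ici 0))
    (hφbdd : ∀ t ∈ Set.Ici (0:ℝ), φ t ∈ Set.Icc (-a) a)
    (μ : ℝ → ℝ) (hμC1 : ContDiffOn ℝ 1 μ (Set.Ici 0)) (hμ0 : μ 0 = 0)
    (hμpos : ∀ x : ℝ, 0 < x → 0 < μ x) (hμle : ∀ x : ℝ, 0 ≤ x → μ x ≤ 1)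
    (ϑ : ℝ) (hϑdef : ϑ = min (α * (D - a)) (min (d + α * (D - a) - g * c⁻¹ * r * d) d))
    (hϑpos : 0 < ϑ)
    (s m₁ m₂ : ℝ → ℝ)
    (hsol : ∀ t ∈ (Set.Ici (0:ℝ)),
        HasDerivWithinAt s ((D + φ t) * (sIn - α * s t) - c * μ (s t) * (m₁ t + m₂ t) + r * d * m₁ t) (Set.Ici (0:ℝ)) t ∧
        HasDerivWithinAt m₁ (m₁ t * (-d - α * (D + φ t) + g * μ (s t) - r₁ * m₁ t - r₂ * m₂ t - α₁) + α₂ * m₂ t) (Set.Ici (0:ℝ)) t ∧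
        HasDerivWithinAt m₂ (m₂ t * (-d + g * μ (s t) - r₁ * m₁ t - r₂ * m₂ t - α₂) + α₁ * m₁ t) (Set.Ici (0:ℝ)) t)
    (hoct : ∀ t ∈ (Set.Ici (0:ℝ)), 0 ≤ s t ∧ 0 ≤ m₁ t ∧ 0 ≤ m₂ t) :
    Filter.limsup (fun t => g * s t + c * (m₁ t + m₂ t)) Filter.atTop ≤
      g * (D + a) * sIn / ϑ := by
  have hϑ1 : ϑ ≤ α * (D - a) := by rw [hϑdef]; exact min_le_left _ _
  have hϑ2 : ϑ ≤ d + α * (D - a) - g * c⁻¹ * r * d := by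
    rw [hϑdef]; exact (min_le_right _ _).trans (min_le_left _ _)
  have hϑ3 : ϑ ≤ d := by rw [hϑdef]; exact (min_le_right _ _).trans (min_le_right _ _)
  set K : ℝ := g * (D + a) * sIn with hK
  set V : ℝ → ℝ := fun t => g * s t + c * (m₁ t + m₂ t) with hVdef
  set W : ℝ → ℝ := fun t => (V t - K / ϑ) * Real.exp (ϑ * t) with hWdef
  -- derivative of V within Ici 0
  have hVd : ∀ t ∈ Set.Ici (0:ℝ), HasDerivWithinAt V
      (g * ((D + φ t) * (sIn - α * s t) - c * μ (s t) * (m₁ t + m₂ t) + r * d * m₁ t)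
        + c * ((m₁ t * (-d - α * (D + φ t) + g * μ (s t) - r₁ * m₁ t - r₂ * m₂ t - α₁) + α₂ * m₂ t)
             + (m₂ t * (-d + g * μ (s t) - r₁ * m₁ t - r₂ * m₂ t - α₂) + α₁ * m₁ t)))
      (Set.Ici (0:ℝ)) t := by
    intro t ht
    obtain ⟨hs', hm1', hm2'⟩ := hsol t ht
    exact ((hs'.const_mul g).add ((hm1'.add hm2').const_mul c))
  -- derivative of W within Ici 0
  have hexp : ∀ t : ℝ, HasDerivAt (fun t => Real.exp (ϑ * t)) (ϑ * Real.exp (ϑ * t)) t := by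
    intro t
    have h := (Real.hasDerivAt_exp (ϑ * t)).comp t ((hasDerivAt_id t).const_mul ϑ)
    simpa [mul_comm, Function.comp_def] using h
  have hWd : ∀ t ∈ Set.Ici (0:ℝ), HasDerivWithinAt W
      ((g * ((D + φ t) * (sIn - α * s t) - c * μ (s t) * (m₁ t + m₂ t) + r * d * m₁ t)
        + c * ((m₁ t * (-d - α * (D + φ t) + g * μ (s t) - r₁ * m₁ t - r₂ * m₂ t - α₁) + α₂ * m₂ t)
             + (m₂ t * (-d + g * μ (s t) - r₁ * m₁ t - r₂ * m₂ t - α₂) + α₁ * m₁ t))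
        + ϑ * V t - K) * Real.exp (ϑ * t))
      (Set.Ici (0:ℝ)) t := by
    intro t ht
    have h := ((hVd t ht).sub_const (K / ϑ)).mul ((hexp t).hasDerivWithinAt)
    have hϑne : ϑ ≠ 0 := hϑpos.ne'
    refine h.congr_deriv ?_
    field_simp
    ring
  -- the derivative of W is nonpositive
  have hWd_nonpos : ∀ t ∈ Set.Ici (0:ℝ),
      (g * ((D + φ t) * (sIn - α * s t) - c * μ (s t) * (m₁ t + m₂ t) + r * d * m₁ t)
        + c * ((m₁ t * (-d - α * (D + φ t) + g * μ (s t) - r₁ * m₁ t - r₂ * m₂ t - α₁) + α₂ * m₂ t)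
             + (m₂ t * (-d + g * μ (s t) - r₁ * m₁ t - r₂ * m₂ t - α₂) + α₁ * m₁ t))
        + ϑ * V t - K) * Real.exp (ϑ * t) ≤ 0 := by
    intro t ht
    obtain ⟨hst, hm1t, hm2t⟩ := hoct t ht
    obtain ⟨hφ1, hφ2⟩ := hφbdd t ht
    have hμnn : 0 ≤ μ (s t) := by
      rcases eq_or_lt_of_le hst with h | h
      · simp [← h, hμ0]
      · exact (hμpos _ h).le
    have key := chemostat_key_ineq D a sIn c g d r α α₁ α₂ r₁ r₂ ϑ (φ t) (s t)
      (m₁ t) (m₂ t) (μ (s t)) hc hg hsIn hα hϑ1 hϑ2 hϑ3 hφ1 hφ2 hst hm1t hm2t hr₁ hr₂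
    have hE : (0:ℝ) < Real.exp (ϑ * t) := Real.exp_pos _
    have : g * ((D + φ t) * (sIn - α * s t) - c * μ (s t) * (m₁ t + m₂ t) + r * d * m₁ t)
        + c * ((m₁ t * (-d - α * (D + φ t) + g * μ (s t) - r₁ * m₁ t - r₂ * m₂ t - α₁) + α₂ * m₂ t)
             + (m₂ t * (-d + g * μ (s t) - r₁ * m₁ t - r₂ * m₂ t - α₂) + α₁ * m₁ t))
        + ϑ * V t - K ≤ 0 := by
      simp only [hVdef, hK]; linarith [key]
    exact mul_nonpos_of_nonpos_of_nonneg this hE.le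
  -- W is antitone on Ici 0
  have hWanti : AntitoneOn W (Set.Ici 0) := by
    apply antitoneOn_of_deriv_nonpos (convex_Ici 0)
    · intro t ht
      exact ((hWd t ht).continuousWithinAt)
    · intro t ht
      rw [interior_Ici] at ht
      have hmem : Set.Ici (0:ℝ) ∈ nhds t := Ici_mem_nhds ht
      exact ((hWd t (Set.mem_Ici.mpr (le_of_lt ht))).hasDerivAt hmem).differentiableAt.differentiableWithinAt
    · intro t ht
      rw [interior_Ici] at ht
      have hmem : Set.Ici (0:ℝ) ∈ nhds t := Ici_mem_nhds ht
      rw [((hWd t (Set.mem_Ici.mpr (le_of_lt ht))).hasDerivAt hmem).deriv]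
      exact hWd_nonpos t (Set.mem_Ici.mpr (le_of_lt ht))
  -- pointwise bound
  have hbound : ∀ t : ℝ, 0 ≤ t →
      V t ≤ K / ϑ + (V 0 - K / ϑ) * Real.exp (-(ϑ * t)) := by
    intro t ht
    have hW := hWanti (Set.self_mem_Ici) ht ht
    have hW0 : W 0 = V 0 - K / ϑ := by simp [hWdef]
    rw [hW0] at hW
    have hE : (0:ℝ) < Real.exp (ϑ * t) := Real.exp_pos _
    have h2 := mul_le_mul_of_nonneg_right hW (Real.exp_nonneg (-(ϑ * t)))
    have hee : Real.exp (ϑ * t) * Real.exp (-(ϑ * t)) = 1 := by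
      rw [← Real.exp_add]; simp
    have : (V t - K / ϑ) * (Real.exp (ϑ * t) * Real.exp (-(ϑ * t)))
        ≤ (V 0 - K / ϑ) * Real.exp (-(ϑ * t)) := by
      calc (V t - K / ϑ) * (Real.exp (ϑ * t) * Real.exp (-(ϑ * t)))
          = W t * Real.exp (-(ϑ * t)) := by rw [hWdef]; ring
        _ ≤ _ := h2
    rw [hee, mul_one] at this
    linarith
  -- limsup comparison
  set u : ℝ → ℝ := fun t => K / ϑ + (V 0 - K / ϑ) * Real.exp (-(ϑ * t)) with hudef
  have hu_tendsto : Filter.Tendsto u Filter.atTop (nhds (K / ϑ)) := by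
    have h1 : Filter.Tendsto (fun t : ℝ => -(ϑ * t)) Filter.atTop Filter.atBot := by
      apply Filter.tendsto_neg_atBot_iff.mpr
      exact Filter.Tendsto.const_mul_atTop hϑpos Filter.tendsto_id
    have h2 : Filter.Tendsto (fun t : ℝ => Real.exp (-(ϑ * t))) Filter.atTop (nhds 0) :=
      Real.tendsto_exp_atBot.comp h1
    have h3 : Filter.Tendsto (fun t : ℝ => (V 0 - K / ϑ) * Real.exp (-(ϑ * t)))
        Filter.atTop (nhds 0) := by
      simpa using h2.const_mul (V 0 - K / ϑ)
    simpa using (tendsto_const_nhds (x := K / ϑ)).add h3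
  have hVle : ∀ᶠ t in Filter.atTop, V t ≤ u t := by
    filter_upwards [Filter.eventually_ge_atTop (0:ℝ)] with t ht
    exact hbound t ht
  have hVnonneg : ∀ᶠ t in Filter.atTop, (0:ℝ) ≤ V t := by
    filter_upwards [Filter.eventually_ge_atTop (0:ℝ)] with t ht
    obtain ⟨h1, h2, h3⟩ := hoct t ht
    have : 0 ≤ g * s t + c * (m₁ t + m₂ t) := by positivity
    simpa [hVdef] using this
  have hcobdd : Filter.IsCoboundedUnder (· ≤ ·) Filter.atTop V :=
    Filter.isCoboundedUnder_le_of_eventually_le Filter.atTop hVnonneg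
  have hbdd : Filter.IsBoundedUnder (· ≤ ·) Filter.atTop u :=
    hu_tendsto.isBoundedUnder_le
  have h := Filter.limsup_le_limsup hVle hcobdd hbdd
  rw [hu_tendsto.limsup_eq] at h
  simpa [hVdef, hK] using h
end

section
/- Let (s, m₁, m₂) be a solution of the random chemostat system on an interval J with m₁(t) > 0 and m₂(t) > 0 for all t ∈ J. Then the proportion p(t) := m₁(t)/(m₁(t)+m₂(t)) is differentiable on J and satisfies the Riccati equation p'(t) = α(D + φ(t)) p(t)² − (α(D + φ(t)) + α₁ + α₂) p(t) + α₂. -/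
/-- Along any solution with `m₁, m₂ > 0` on an interval `J ⊆ [0,∞)`, the
proportion `p = m₁/(m₁+m₂)` is differentiable and satisfies the Riccati equation
`p' = α(D+φ(t))p² − (α(D+φ(t)) + α₁ + α₂)p + α₂`. -/
theorem random_chemostat_proportion_riccati
    (D a sIn c g d r α α₁ α₂ r₁ r₂ : ℝ)
    (ha : 0 < a) (hDa : a < D) (hsIn : 0 < sIn) (hc : 0 < c)
    (hg : 0 < g) (hgc : g ≤ c) (hd : 0 < d) (hr0 : 0 < r) (hr1 : r < 1)
    (hα : 0 < α) (hα₁ : 0 ≤ α₁) (hα₂ : 0 ≤ α₂) (hr₁ : 0 < r₁) (hr₂ : 0 < r₂)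
    (φ : ℝ → ℝ) (hφcont : ContinuousOn φ (Set.Ici 0))
    (hφbdd : ∀ t ∈ Set.Ici (0:ℝ), φ t ∈ Set.Icc (-a) a)
    (μ : ℝ → ℝ) (hμC1 : ContDiffOn ℝ 1 μ (Set.Ici 0)) (hμ0 : μ 0 = 0)
    (hμpos : ∀ x : ℝ, 0 < x → 0 < μ x) (hμle : ∀ x : ℝ, 0 ≤ x → μ x ≤ 1)
    (J : Set ℝ) (hJ : J.OrdConnected) (hJsub : J ⊆ Set.Ici 0)
    (s m₁ m₂ : ℝ → ℝ)
    (hsol : ∀ t ∈ J,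
        HasDerivWithinAt s ((D + φ t) * (sIn - α * s t) - c * μ (s t) * (m₁ t + m₂ t) + r * d * m₁ t) J t ∧
        HasDerivWithinAt m₁ (m₁ t * (-d - α * (D + φ t) + g * μ (s t) - r₁ * m₁ t - r₂ * m₂ t - α₁) + α₂ * m₂ t) J t ∧
        HasDerivWithinAt m₂ (m₂ t * (-d + g * μ (s t) - r₁ * m₁ t - r₂ * m₂ t - α₂) + α₁ * m₁ t) J t)
    (hm : ∀ t ∈ J, 0 < m₁ t ∧ 0 < m₂ t) :
    ∀ t ∈ J,
      HasDerivWithinAt (fun τ => m₁ τ / (m₁ τ + m₂ τ))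
        (α * (D + φ t) * (m₁ t / (m₁ t + m₂ t)) ^ 2 -
          (α * (D + φ t) + α₁ + α₂) * (m₁ t / (m₁ t + m₂ t)) + α₂) J t := by
  intro t ht
  obtain ⟨-, h1, h2⟩ := hsol t ht
  obtain ⟨hp1, hp2⟩ := hm t ht
  have hne : m₁ t + m₂ t ≠ 0 := by positivity
  have hd := h1.div (h1.add h2) hne
  refine hd.congr_deriv ?_
  simp only [Pi.add_apply]
  field_simp
  ring
end

section
/- Assume α₁ + α₂ > 0 and let p : [0, ∞) → ℝ be a solution of the Riccati equation p'(t) = α(D + φ(t)) p(t)² − (α(D + φ(t)) + α₁ + α₂) p(t) + α₂ with p(0) ∈ [0, 1]. Then p(t) ∈ [0, 1] for all t ≥ 0 and, moreover, p(t) ≤ p(0) e^{−(α₁+α₂)t} + (α₂/(α₁+α₂))(1 − e^{−(α₁+α₂)t}) for all t ≥ 0; in particular limsup_{t→∞} p(t) ≤ α₂/(α₁+α₂). -/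
/-- Any solution of the Riccati equation for the proportion `p` with
`p(0) ∈ [0,1]` stays in `[0,1]` and satisfies
`p(t) ≤ p(0)e^{−(α₁+α₂)t} + (α₂/(α₁+α₂))(1 − e^{−(α₁+α₂)t})`; in particular
`limsup_{t→∞} p(t) ≤ α₂/(α₁+α₂)`. -/
theorem riccati_proportion_upper_bound
    (D a α α₁ α₂ : ℝ)
    (ha : 0 < a) (hDa : a < D) (hα : 0 < α) (hα₁ : 0 ≤ α₁) (hα₂ : 0 ≤ α₂)
    (hsum : 0 < α₁ + α₂)
    (φ : ℝ → ℝ) (hφcont : ContinuousOn φ (Set.Ici 0))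
    (hφbdd : ∀ t ∈ Set.Ici (0:ℝ), φ t ∈ Set.Icc (-a) a)
    (p : ℝ → ℝ) (hp0 : p 0 ∈ Set.Icc (0:ℝ) 1)
    (hp : ∀ t ∈ Set.Ici (0:ℝ),
      HasDerivWithinAt p
        (α * (D + φ t) * p t ^ 2 - (α * (D + φ t) + α₁ + α₂) * p t + α₂)
        (Set.Ici 0) t) :
    (∀ t ∈ Set.Ici (0:ℝ), p t ∈ Set.Icc (0:ℝ) 1 ∧
      p t ≤ p 0 * Real.exp (-(α₁ + α₂) * t) +
        (α₂ / (α₁ + α₂)) * (1 - Real.exp (-(α₁ + α₂) * t))) ∧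
    Filter.limsup p Filter.atTop ≤ α₂ / (α₁ + α₂) := by
  set s := α₁ + α₂ with hs
  have hpc : ContinuousOn p (Set.Ici 0) := fun t ht => (hp t ht).continuousWithinAt
  have hfpos : ∀ t ∈ Set.Ici (0:ℝ), 0 < α * (D + φ t) := by
    intro t ht
    have := (hφbdd t ht).1
    have : 0 < D + φ t := by linarith
    positivity
  have hfle : ∀ t ∈ Set.Ici (0:ℝ), α * (D + φ t) ≤ α * (D + a) := by
    intro t ht
    have := (hφbdd t ht).2
    nlinarith
  have hderiv : ∀ t : ℝ, 0 < t → HasDerivAt p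
      (α * (D + φ t) * p t ^ 2 - (α * (D + φ t) + α₁ + α₂) * p t + α₂) t := by
    intro t ht
    exact (hp t (le_of_lt ht)).hasDerivAt (Ici_mem_nhds ht)
  -- Step 1: nonnegativity
  have hnonneg : ∀ t ∈ Set.Ici (0:ℝ), 0 ≤ p t := by
    by_contra hcon
    push_neg at hcon
    obtain ⟨t₁, ht₁, hpt₁⟩ := hcon
    have ht₁pos : 0 < t₁ := by
      rcases lt_or_eq_of_le (Set.mem_Ici.mp ht₁) with h | h
      · exact h
      · exact absurd hpt₁ (by rw [← h]; linarith [hp0.1])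
    set S : Set ℝ := {t ∈ Set.Icc 0 t₁ | 0 ≤ p t} with hS
    have hSsub : S ⊆ Set.Icc 0 t₁ := fun t ht => ht.1
    have hSclosed : IsClosed S := by
      have : S = Set.Icc 0 t₁ ∩ p ⁻¹' Set.Ici 0 := by
        ext t
        simp only [hS, Set.mem_setOf_eq, Set.mem_inter_iff, Set.mem_preimage, Set.mem_Ici]
      rw [this]
      exact (hpc.mono (Set.Icc_subset_Ici_self)).preimage_isClosed_of_isClosed
        isClosed_Icc isClosed_Ici
    have hSne : S.Nonempty := ⟨0, ⟨le_refl 0, le_of_lt ht₁pos⟩, hp0.1⟩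
    have hScomp : IsCompact S := isCompact_Icc.of_isClosed_subset hSclosed hSsub
    set t₀ := sSup S with ht₀
    have ht₀S : t₀ ∈ S := hScomp.sSup_mem hSne
    have ht₀mem : t₀ ∈ Set.Icc 0 t₁ := hSsub ht₀S
    have ht₀lt : t₀ < t₁ := lt_of_le_of_ne ht₀mem.2 (by
      intro h; rw [h] at ht₀S; linarith [ht₀S.2])
    have hneg : ∀ u ∈ Set.Ioc t₀ t₁, p u < 0 := by
      intro u hu
      by_contra h
      push_neg at h
      have : u ∈ S := ⟨⟨le_trans ht₀mem.1 (le_of_lt hu.1), hu.2⟩, h⟩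
      exact absurd (le_csSup hScomp.bddAbove this) (not_le.mpr hu.1)
    have hmono : MonotoneOn p (Set.Icc t₀ t₁) := by
      apply monotoneOn_of_deriv_nonneg (convex_Icc t₀ t₁)
        (hpc.mono (fun u hu => Set.mem_Ici.mpr (le_trans ht₀mem.1 hu.1)))
      · rw [interior_Icc]
        intro x hx
        have hx0 : 0 < x := lt_of_le_of_lt ht₀mem.1 hx.1
        exact ((hderiv x hx0).differentiableAt).differentiableWithinAt
      · rw [interior_Icc]
        intro x hx
        have hx0 : 0 < x := lt_of_le_of_lt ht₀mem.1 hx.1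
        rw [(hderiv x hx0).deriv]
        have h1 := hfpos x (le_of_lt hx0)
        have h2 : p x < 0 := hneg x ⟨hx.1, le_of_lt hx.2⟩
        nlinarith
    have := hmono (Set.left_mem_Icc.mpr (le_of_lt ht₀lt))
      (Set.right_mem_Icc.mpr (le_of_lt ht₀lt)) (le_of_lt ht₀lt)
    linarith [ht₀S.2]
  -- Step 2: upper bound by 1
  have hle_one : ∀ t ∈ Set.Ici (0:ℝ), p t ≤ 1 := by
    by_contra hcon
    push_neg at hcon
    obtain ⟨t₁, ht₁, hpt₁⟩ := hcon
    have ht₁pos : 0 < t₁ := by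
      rcases lt_or_eq_of_le (Set.mem_Ici.mp ht₁) with h | h
      · exact h
      · exact absurd hpt₁ (by rw [← h]; linarith [hp0.2])
    obtain ⟨c, hc, hcmax⟩ := isCompact_Icc.exists_isMaxOn (Set.nonempty_Icc.mpr (le_of_lt ht₁pos))
      (hpc.mono Set.Icc_subset_Ici_self)
    set C := max (p c) 1 with hC
    have hC1 : 1 ≤ C := le_max_right _ _
    have hCub : ∀ u ∈ Set.Icc 0 t₁, p u ≤ C := fun u hu => le_trans (hcmax hu) (le_max_left _ _)
    set K := α * (D + a) * C with hK
    have hKpos : 0 < K := by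
      have h1 : 0 < D + a := by linarith
      have h2 : 0 < C := lt_of_lt_of_le one_pos hC1
      rw [hK]; positivity
    set S : Set ℝ := {t ∈ Set.Icc 0 t₁ | p t ≤ 1} with hS
    have hSsub : S ⊆ Set.Icc 0 t₁ := fun t ht => ht.1
    have hSclosed : IsClosed S := by
      have : S = Set.Icc 0 t₁ ∩ p ⁻¹' Set.Iic 1 := by
        ext t
        simp only [hS, Set.mem_setOf_eq, Set.mem_inter_iff, Set.mem_preimage, Set.mem_Iic]
      rw [this]
      exact (hpc.mono (Set.Icc_subset_Ici_self)).preimage_isClosed_of_isClosed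
        isClosed_Icc isClosed_Iic
    have hSne : S.Nonempty := ⟨0, ⟨le_refl 0, le_of_lt ht₁pos⟩, hp0.2⟩
    have hScomp : IsCompact S := isCompact_Icc.of_isClosed_subset hSclosed hSsub
    set t₀ := sSup S with ht₀
    have ht₀S : t₀ ∈ S := hScomp.sSup_mem hSne
    have ht₀mem : t₀ ∈ Set.Icc 0 t₁ := hSsub ht₀S
    have ht₀lt : t₀ < t₁ := lt_of_le_of_ne ht₀mem.2 (by
      intro h; rw [h] at ht₀S; linarith [ht₀S.2])
    have hgt : ∀ u ∈ Set.Ioc t₀ t₁, 1 < p u := by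
      intro u hu
      by_contra h
      push_neg at h
      have : u ∈ S := ⟨⟨le_trans ht₀mem.1 (le_of_lt hu.1), hu.2⟩, h⟩
      exact absurd (le_csSup hScomp.bddAbove this) (not_le.mpr hu.1)
    set w : ℝ → ℝ := fun t => (p t - 1) * Real.exp (-K * t) with hw
    have hwderiv : ∀ x : ℝ, 0 < x → HasDerivAt w
        ((α * (D + φ x) * p x ^ 2 - (α * (D + φ x) + α₁ + α₂) * p x + α₂) * Real.exp (-K * x)
          + (p x - 1) * (Real.exp (-K * x) * -K)) x := by
      intro x hx
      have he : HasDerivAt (fun t : ℝ => Real.exp (-K * t)) (Real.exp (-K * x) * -K) x := by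
        have : HasDerivAt (fun t : ℝ => -K * t) (-K) x := by
          simpa using (hasDerivAt_id x).const_mul (-K)
        simpa [mul_comm] using this.exp
      exact ((hderiv x hx).sub_const 1).mul he
    have hanti : AntitoneOn w (Set.Icc t₀ t₁) := by
      apply antitoneOn_of_deriv_nonpos (convex_Icc t₀ t₁)
      · exact ((hpc.mono (fun u hu => Set.mem_Ici.mpr (le_trans ht₀mem.1 hu.1))).sub continuousOn_const).mul
          (Real.continuous_exp.comp (continuous_const.mul continuous_id)).continuousOn
      · rw [interior_Icc]
        intro x hx
        have hx0 : 0 < x := lt_of_le_of_lt ht₀mem.1 hx.1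
        exact ((hwderiv x hx0).differentiableAt).differentiableWithinAt
      · rw [interior_Icc]
        intro x hx
        have hx0 : 0 < x := lt_of_le_of_lt ht₀mem.1 hx.1
        rw [(hwderiv x hx0).deriv]
        have hE : 0 < Real.exp (-K * x) := Real.exp_pos _
        have h1 := hfpos x (le_of_lt hx0)
        have h2 := hfle x (le_of_lt hx0)
        have h3 : 1 < p x := hgt x ⟨hx.1, le_of_lt hx.2⟩
        have h4 : p x ≤ C := hCub x ⟨le_of_lt hx0, le_of_lt hx.2⟩
        have key : α * (D + φ x) * p x ^ 2 - (α * (D + φ x) + α₁ + α₂) * p x + α₂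
            ≤ K * (p x - 1) := by
          rw [hK]
          have hc1 : (0:ℝ) ≤ p x * (p x - 1) := by nlinarith
          have hc2 : (0:ℝ) ≤ α * (D + a) * (p x - 1) := by nlinarith
          nlinarith [mul_le_mul_of_nonneg_right h2 hc1,
            mul_le_mul_of_nonneg_right h4 hc2,
            mul_nonneg hα₁ (by linarith : (0:ℝ) ≤ p x - 1),
            mul_nonneg hα₂ (by linarith : (0:ℝ) ≤ p x - 1)]
        nlinarith [mul_le_mul_of_nonneg_right key hE.le]
    have hw0 : w t₀ ≤ 0 := by
      have h1 : p t₀ - 1 ≤ 0 := by linarith [ht₀S.2]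
      show (p t₀ - 1) * Real.exp (-K * t₀) ≤ 0
      exact mul_nonpos_of_nonpos_of_nonneg h1 (Real.exp_pos _).le
    have := hanti (Set.left_mem_Icc.mpr (le_of_lt ht₀lt))
      (Set.right_mem_Icc.mpr (le_of_lt ht₀lt)) (le_of_lt ht₀lt)
    have hE : 0 < Real.exp (-K * t₁) := Real.exp_pos _
    have hwt₁ : 0 < w t₁ := by
      show 0 < (p t₁ - 1) * Real.exp (-K * t₁)
      exact mul_pos (by linarith) hE
    linarith
  -- Step 3: comparison with linear ODE solution
  have hbound : ∀ t ∈ Set.Ici (0:ℝ), p t ≤ p 0 * Real.exp (-s * t)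
      + (α₂ / s) * (1 - Real.exp (-s * t)) := by
    set w : ℝ → ℝ := fun t => (p t - α₂ / s) * Real.exp (s * t) with hw
    have hwderiv : ∀ x : ℝ, 0 < x → HasDerivAt w
        ((α * (D + φ x) * p x ^ 2 - (α * (D + φ x) + α₁ + α₂) * p x + α₂) * Real.exp (s * x)
          + (p x - α₂ / s) * (Real.exp (s * x) * s)) x := by
      intro x hx
      have he : HasDerivAt (fun t : ℝ => Real.exp (s * t)) (Real.exp (s * x) * s) x := by
        have : HasDerivAt (fun t : ℝ => s * t) s x := by
          simpa using (hasDerivAt_id x).const_mul s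
        simpa [mul_comm] using this.exp
      exact ((hderiv x hx).sub_const _).mul he
    have hanti : AntitoneOn w (Set.Ici 0) := by
      apply antitoneOn_of_deriv_nonpos (convex_Ici 0)
      · exact ((hpc.sub continuousOn_const)).mul
          (Real.continuous_exp.comp (continuous_const.mul continuous_id)).continuousOn
      · rw [interior_Ici]
        intro x hx
        exact ((hwderiv x hx).differentiableAt).differentiableWithinAt
      · rw [interior_Ici]
        intro x hx
        rw [(hwderiv x hx).deriv]
        have hE : 0 < Real.exp (s * x) := Real.exp_pos _
        have h1 := hfpos x (le_of_lt (show (0:ℝ) < x from hx))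
        have h2 := hnonneg x (le_of_lt (show (0:ℝ) < x from hx))
        have h3 := hle_one x (le_of_lt (show (0:ℝ) < x from hx))
        have hdiv : s * (α₂ / s) = α₂ := mul_div_cancel₀ _ (ne_of_gt hsum)
        have key : (α * (D + φ x) * p x ^ 2 - (α * (D + φ x) + α₁ + α₂) * p x + α₂)
            + (p x - α₂ / s) * s ≤ 0 := by
          have : (p x - α₂ / s) * s = s * p x - α₂ := by
            rw [sub_mul, mul_comm]; rw [mul_comm (α₂/s) s, hdiv]
          rw [this, hs]
          nlinarith [mul_nonneg h1.le (mul_nonneg h2 (sub_nonneg.mpr h3))]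
        nlinarith
    intro t ht
    have := hanti (Set.self_mem_Ici) ht ht
    simp only [hw, mul_zero, Real.exp_zero, mul_one] at this
    -- (p t - α₂/s) * exp (s t) ≤ p 0 - α₂/s
    have hE : 0 < Real.exp (s * t) := Real.exp_pos _
    have hcancel : Real.exp (s * t) * Real.exp (-s * t) = 1 := by
      rw [neg_mul, Real.exp_neg, mul_inv_cancel₀ (Real.exp_ne_zero _)]
    have hmul := mul_le_mul_of_nonneg_right this (Real.exp_pos (-s * t)).le
    have h2 : p t - α₂ / s ≤ (p 0 - α₂ / s) * Real.exp (-s * t) := by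
      calc p t - α₂ / s = (p t - α₂ / s) * (Real.exp (s * t) * Real.exp (-s * t)) := by
            rw [hcancel, mul_one]
        _ = (p t - α₂ / s) * Real.exp (s * t) * Real.exp (-s * t) := by ring
        _ ≤ (p 0 - α₂ / s) * Real.exp (-s * t) := hmul
    have : p 0 * Real.exp (-s * t) + (α₂ / s) * (1 - Real.exp (-s * t))
        = (p 0 - α₂ / s) * Real.exp (-s * t) + α₂ / s := by ring
    linarith
  refine ⟨fun t ht => ⟨Set.mem_Icc.mpr ⟨hnonneg t ht, hle_one t ht⟩, hbound t ht⟩, ?_⟩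
  -- Step 4: limsup
  set q : ℝ → ℝ := fun t => p 0 * Real.exp (-s * t) + (α₂ / s) * (1 - Real.exp (-s * t)) with hq
  have hqten : Filter.Tendsto q Filter.atTop (nhds (α₂ / s)) := by
    have he : Filter.Tendsto (fun t : ℝ => Real.exp (-s * t)) Filter.atTop (nhds 0) := by
      have hst : Filter.Tendsto (fun t : ℝ => s * t) Filter.atTop Filter.atTop :=
        Filter.Tendsto.const_mul_atTop hsum Filter.tendsto_id
      exact Filter.Tendsto.congr (fun t => by simp [Function.comp, neg_mul])
        (Real.tendsto_exp_neg_atTop_nhds_zero.comp hst)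
    have : Filter.Tendsto q Filter.atTop (nhds (p 0 * 0 + (α₂ / s) * (1 - 0))) := by
      exact ((tendsto_const_nhds.mul he)).add
        (tendsto_const_nhds.mul (tendsto_const_nhds.sub he))
    simpa using this
  have h_ev : ∀ᶠ t in Filter.atTop, p t ≤ q t := by
    filter_upwards [Filter.eventually_ge_atTop 0] with t ht
    exact hbound t ht
  have h_ev0 : ∀ᶠ t in Filter.atTop, (0:ℝ) ≤ p t := by
    filter_upwards [Filter.eventually_ge_atTop 0] with t ht
    exact hnonneg t ht
  calc Filter.limsup p Filter.atTop ≤ Filter.limsup q Filter.atTop :=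
        Filter.limsup_le_limsup h_ev
          (Filter.isCoboundedUnder_le_of_eventually_le Filter.atTop h_ev0)
          hqten.isBoundedUnder_le
    _ = α₂ / s := hqten.limsup_eq
end

section
/- Assume α₁ + α₂ > 0 and let p : [0, ∞) → ℝ be a solution of the Riccati equation p'(t) = α(D + φ(t)) p(t)² − (α(D + φ(t)) + α₁ + α₂) p(t) + α₂ with p(0) ∈ [0, 1]. Then liminf_{t→∞} p(t) ≥ α₂/(α₁ + α₂ + α D_max); that is, for every ε > 0 there exists t_ε > 0 such that p(t) ≥ α₂/(α₁ + α₂ + α D_max) − ε for all t ≥ t_ε. -/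
open Set Filter MeasureTheory intervalIntegral

lemma aux_nonpos (g r q : ℝ → ℝ) (hg : ContinuousOn g (Set.Ici 0))
    (hq : ∀ t ∈ Set.Ici (0:ℝ), HasDerivWithinAt q (g t * q t + r t) (Set.Ici 0) t)
    (hr : ∀ t ∈ Set.Ici (0:ℝ), r t ≤ 0) (h0 : q 0 ≤ 0) :
    ∀ t ∈ Set.Ici (0:ℝ), q t ≤ 0 := by
  set G : ℝ → ℝ := fun t => ∫ s in (0:ℝ)..t, g s with hG
  have hint : ∀ t ∈ Set.Ici (0:ℝ), IntervalIntegrable g MeasureTheory.volume 0 t := by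
    intro t ht
    exact ContinuousOn.intervalIntegrable_of_Icc (Set.mem_Ici.mp ht)
      (hg.mono Set.Icc_subset_Ici_self)
  have hGd : ∀ t ∈ Set.Ici (0:ℝ), HasDerivWithinAt G (g t) (Set.Ici 0) t := by
    intro t ht
    rcases eq_or_lt_of_le (Set.mem_Ici.mp ht) with h0t | h0t
    · subst h0t
      exact integral_hasDerivWithinAt_right (hint 0 Set.self_mem_Ici)
        ⟨Ioi 0, self_mem_nhdsWithin, (hg.mono Set.Ioi_subset_Ici_self
          |>.aestronglyMeasurable measurableSet_Ioi)⟩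
        ((hg 0 Set.self_mem_Ici).mono Set.Ioi_subset_Ici_self)
    · have hGa : HasDerivAt G (g t) t := by
        apply integral_hasDerivAt_right (hint t ht)
        · exact ⟨Set.Ici 0, Ici_mem_nhds h0t, hg.aestronglyMeasurable measurableSet_Ici⟩
        · exact (hg t ht).continuousAt (Ici_mem_nhds h0t)
      exact hGa.hasDerivWithinAt
  have hGc : ContinuousOn G (Set.Ici 0) := fun t ht => (hGd t ht).continuousWithinAt
  have hqc : ContinuousOn q (Set.Ici 0) := fun t ht => (hq t ht).continuousWithinAt
  set F : ℝ → ℝ := fun t => q t * Real.exp (-G t) with hF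
  have hFc : ContinuousOn F (Set.Ici 0) :=
    hqc.mul ((Real.continuous_exp.comp_continuousOn hGc.neg))
  have hFd : ∀ t ∈ interior (Set.Ici (0:ℝ)),
      HasDerivAt F ((g t * q t + r t) * Real.exp (-G t)
        + q t * (Real.exp (-G t) * -(g t))) t := by
    intro t ht
    rw [interior_Ici] at ht
    have h1 : HasDerivAt q (g t * q t + r t) t :=
      (hq t (Set.mem_Ici.mpr (le_of_lt ht))).hasDerivAt (Ici_mem_nhds ht)
    have h2 : HasDerivAt G (g t) t := (hGd t (Set.mem_Ici.mpr (le_of_lt ht))).hasDerivAt (Ici_mem_nhds ht)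
    exact h1.mul (h2.neg.exp)
  have hanti : AntitoneOn F (Set.Ici 0) := by
    apply antitoneOn_of_deriv_nonpos (convex_Ici 0) hFc
    · exact fun t ht => ((hFd t ht).differentiableAt).differentiableWithinAt
    · intro t ht
      rw [(hFd t ht).deriv]
      have hE := Real.exp_pos (-G t)
      have hrt : r t ≤ 0 := by
        rw [interior_Ici] at ht
        exact hr t (Set.mem_Ici.mpr (le_of_lt ht))
      nlinarith
  intro t ht
  have := hanti (Set.self_mem_Ici) ht ht
  have hG0 : G 0 = 0 := intervalIntegral.integral_same
  rw [hF] at this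
  simp only [hG0, neg_zero, Real.exp_zero, mul_one] at this
  have hE := Real.exp_pos (-G t)
  nlinarith

/-- Any solution of the Riccati equation for the proportion `p` with
`p(0) ∈ [0,1]` satisfies `liminf_{t→∞} p(t) ≥ α₂/(α₁+α₂+α D_max)`, i.e. for every `ε > 0`
there is `t_ε > 0` with `p(t) ≥ α₂/(α₁+α₂+α D_max) − ε` for all `t ≥ t_ε`. -/
theorem riccati_proportion_lower_bound
    (D a α α₁ α₂ : ℝ)
    (ha : 0 < a) (hDa : a < D) (hα : 0 < α) (hα₁ : 0 ≤ α₁) (hα₂ : 0 ≤ α₂)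
    (hsum : 0 < α₁ + α₂)
    (φ : ℝ → ℝ) (hφcont : ContinuousOn φ (Set.Ici 0))
    (hφbdd : ∀ t ∈ Set.Ici (0:ℝ), φ t ∈ Set.Icc (-a) a)
    (p : ℝ → ℝ) (hp0 : p 0 ∈ Set.Icc (0:ℝ) 1)
    (hp : ∀ t ∈ Set.Ici (0:ℝ),
      HasDerivWithinAt p
        (α * (D + φ t) * p t ^ 2 - (α * (D + φ t) + α₁ + α₂) * p t + α₂)
        (Set.Ici 0) t) :
    α₂ / (α₁ + α₂ + α * (D + a)) ≤ Filter.liminf p Filter.atTop ∧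
    ∀ ε : ℝ, 0 < ε → ∃ tε : ℝ, 0 < tε ∧
      ∀ t ≥ tε, α₂ / (α₁ + α₂ + α * (D + a)) - ε ≤ p t := by
  have hpc : ContinuousOn p (Set.Ici 0) := fun t ht => (hp t ht).continuousWithinAt
  set c : ℝ := α₁ + α₂ + α * (D + a) with hc_def
  have hc : 0 < c := by rw [hc_def]; nlinarith
  set L : ℝ := α₂ / c with hL_def
  have hcL : c * L = α₂ := by rw [hL_def]; field_simp
  have hL0 : 0 ≤ L := div_nonneg hα₂ hc.le
  have hL1 : L ≤ 1 := by
    rw [hL_def, div_le_one hc, hc_def]; nlinarith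
  -- upper invariance  p ≤ 1
  have hple1 : ∀ t ∈ Set.Ici (0:ℝ), p t ≤ 1 := by
    have := aux_nonpos (fun t => α * (D + φ t) * p t - (α₁ + α₂)) (fun _ => -α₁)
      (fun t => p t - 1)
      (((continuousOn_const.mul (continuousOn_const.add hφcont)).mul hpc).sub
        continuousOn_const)
      (by
        intro t ht
        have h := (hp t ht).sub_const 1
        exact h.congr_deriv (by ring))
      (fun t _ => show -α₁ ≤ 0 by linarith)
      (show p 0 - 1 ≤ 0 by linarith [hp0.2])
    intro t ht
    have h2 : p t - 1 ≤ 0 := this t ht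
    linarith
  -- lower invariance  0 ≤ p
  have hpge0 : ∀ t ∈ Set.Ici (0:ℝ), 0 ≤ p t := by
    have := aux_nonpos
      (fun t => α * (D + φ t) * p t - (α * (D + φ t) + α₁ + α₂)) (fun _ => -α₂)
      (fun t => -p t)
      ((((continuousOn_const.mul (continuousOn_const.add hφcont)).mul hpc).sub
        (((continuousOn_const.mul (continuousOn_const.add hφcont)).add
          continuousOn_const).add continuousOn_const)))
      (by
        intro t ht
        have h := (hp t ht).neg
        exact h.congr_deriv (by ring))
      (fun t _ => show -α₂ ≤ 0 by linarith)
      (show -p 0 ≤ 0 by linarith [hp0.1])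
    intro t ht
    have h2 : -p t ≤ 0 := this t ht
    linarith
  -- comparison:  p t ≥ L - exp (-(c*t))
  set u : ℝ → ℝ := fun t => (p t - L) * Real.exp (c * t) with hu
  have hud : ∀ t ∈ interior (Set.Ici (0:ℝ)),
      HasDerivAt u ((α * (D + φ t) * p t ^ 2 - (α * (D + φ t) + α₁ + α₂) * p t + α₂)
        * Real.exp (c * t) + (p t - L) * (Real.exp (c * t) * c)) t := by
    intro t ht
    rw [interior_Ici] at ht
    have h1 : HasDerivAt (fun t => p t - L)
        (α * (D + φ t) * p t ^ 2 - (α * (D + φ t) + α₁ + α₂) * p t + α₂) t :=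
      (((hp t (Set.mem_Ici.mpr ht.le)).hasDerivAt (Ici_mem_nhds ht)).sub_const L)
    have h2 : HasDerivAt (fun t => Real.exp (c * t)) (Real.exp (c * t) * c) t := by
      simpa using (((hasDerivAt_id t).const_mul c).exp)
    exact h1.mul h2
  have hec : Continuous fun t : ℝ => Real.exp (c * t) := by continuity
  have huc : ContinuousOn u (Set.Ici 0) :=
    (hpc.sub continuousOn_const).mul hec.continuousOn
  have humono : MonotoneOn u (Set.Ici 0) := by
    apply monotoneOn_of_deriv_nonneg (convex_Ici 0) huc
    · exact fun t ht => ((hud t ht).differentiableAt).differentiableWithinAt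
    · intro t ht
      rw [(hud t ht).deriv]
      rw [interior_Ici] at ht
      have hE := Real.exp_pos (c * t)
      have hp0t := hpge0 t (Set.mem_Ici.mpr ht.le)
      have hφt := hφbdd t (Set.mem_Ici.mpr ht.le)
      have h1 : -a ≤ φ t := hφt.1
      have h2 : φ t ≤ a := hφt.2
      have key : 0 ≤ α * (D + φ t) * p t ^ 2 + α * (a - φ t) * p t := by
        have hD1 : 0 < D + φ t := by linarith
        have hD2 : 0 ≤ a - φ t := by linarith
        positivity
      have : α * (D + φ t) * p t ^ 2 - (α * (D + φ t) + α₁ + α₂) * p t + α₂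
          + (p t - L) * c = α * (D + φ t) * p t ^ 2 + α * (a - φ t) * p t := by
        rw [hc_def] at hcL ⊢
        nlinarith [hcL]
      nlinarith
  have hkey : ∀ t ∈ Set.Ici (0:ℝ), L - Real.exp (-(c * t)) ≤ p t := by
    intro t ht
    have h1 := humono (Set.self_mem_Ici) ht ht
    rw [hu] at h1
    simp only [mul_zero, Real.exp_zero, mul_one] at h1
    have h2 : p 0 - L ≥ -1 := by linarith [hp0.1]
    have hEE : Real.exp (c * t) * Real.exp (-(c * t)) = 1 := by
      rw [← Real.exp_add]; simp
    have hE1 := Real.exp_pos (c * t)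
    have hE2 := Real.exp_pos (-(c * t))
    nlinarith
  have hmain : ∀ ε : ℝ, 0 < ε → ∃ tε : ℝ, 0 < tε ∧ ∀ t ≥ tε, L - ε ≤ p t := by
    intro ε hε
    refine ⟨max 1 (Real.log (1 / ε) / c), lt_of_lt_of_le one_pos (le_max_left _ _), ?_⟩
    intro t htε
    have ht1 : (1:ℝ) ≤ t := le_trans (le_max_left _ _) htε
    have ht0 : (0:ℝ) ≤ t := by linarith
    have ht2 : Real.log (1 / ε) / c ≤ t := le_trans (le_max_right _ _) htε
    have hlog : Real.log (1 / ε) ≤ c * t := by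
      rw [div_le_iff₀ hc] at ht2; linarith [ht2]
    have hexp : Real.exp (-(c * t)) ≤ ε := by
      have : -(c*t) ≤ Real.log ε := by
        rw [one_div, Real.log_inv] at hlog; linarith
      calc Real.exp (-(c * t)) ≤ Real.exp (Real.log ε) := Real.exp_le_exp.2 this
        _ = ε := Real.exp_log hε
    linarith [hkey t ht0]
  constructor
  · have hco : Filter.IsCoboundedUnder (· ≥ ·) Filter.atTop p := by
      refine Filter.isCoboundedUnder_ge_of_eventually_le Filter.atTop (x := 1) ?_
      filter_upwards [Filter.eventually_ge_atTop (0:ℝ)] with t ht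
      exact hple1 t ht
    have hε : ∀ ε : ℝ, 0 < ε → L - ε ≤ Filter.liminf p Filter.atTop := by
      intro ε hε
      obtain ⟨tε, htε, hb⟩ := hmain ε hε
      apply Filter.le_liminf_of_le hco
      filter_upwards [Filter.eventually_ge_atTop tε] with t ht
      exact hb t ht
    refine le_of_forall_pos_le_add fun ε hεp => ?_
    linarith [hε ε hεp]
  · exact hmain
end

section
/- Assume the noise path additionally satisfies lim_{t→∞} (1/t) ∫₀ᵗ φ(τ) dτ = 0, and assume the extinction condition D α · α₂/(α₁ + α₂ + α D_max) + d > g. Then for every solution (s, m₁, m₂) of the random chemostat system on [0, ∞) with values in ℝ³₊ and m₁(0) > 0, m₂(0) > 0, the total microbial biomass becomes extinct: lim_{t→∞} (m₁(t) + m₂(t)) = 0. -/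
open Set Filter

private lemma le_of_deriv_nonneg' {f f' : ℝ → ℝ} {a b : ℝ}
    (hab : a ≤ b)
    (hd : ∀ t ∈ Set.Icc a b, HasDerivWithinAt f (f' t) (Set.Icc a b) t)
    (h0 : ∀ t ∈ Set.Icc a b, 0 ≤ f' t) : f a ≤ f b := by
  have hmono : MonotoneOn f (Set.Icc a b) := by
    apply monotoneOn_of_deriv_nonneg (convex_Icc a b)
      (fun t ht => (hd t ht).continuousWithinAt)
    · intro x hx
      rw [interior_Icc] at hx
      exact ((hd x (Set.mem_Icc_of_Ioo hx)).hasDerivAt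
        (Icc_mem_nhds hx.1 hx.2)).differentiableAt.differentiableWithinAt
    · intro x hx
      rw [interior_Icc] at hx
      rw [((hd x (Set.mem_Icc_of_Ioo hx)).hasDerivAt (Icc_mem_nhds hx.1 hx.2)).deriv]
      exact h0 x (Set.mem_Icc_of_Ioo hx)
  exact hmono (Set.left_mem_Icc.2 hab) (Set.right_mem_Icc.2 hab) hab

set_option maxHeartbeats 1000000 in
/-- **Extinction.** If the noise path has zero time average and
`D α · α₂/(α₁+α₂+α D_max) + d > g`, then the total microbial biomass of every nonnegative
global solution tends to `0`. -/
theorem random_chemostat_extinction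
    (D a sIn c g d r α α₁ α₂ r₁ r₂ : ℝ)
    (ha : 0 < a) (hDa : a < D) (hsIn : 0 < sIn) (hc : 0 < c)
    (hg : 0 < g) (hgc : g ≤ c) (hd : 0 < d) (hr0 : 0 < r) (hr1 : r < 1)
    (hα : 0 < α) (hα₁ : 0 < α₁) (hα₂ : 0 < α₂) (hr₁ : 0 < r₁) (hr₂ : 0 < r₂)
    (φ : ℝ → ℝ) (hφcont : ContinuousOn φ (Set.Ici 0))
    (hφbdd : ∀ t ∈ Set.Ici (0:ℝ), φ t ∈ Set.Icc (-a) a)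
    (hφavg : Filter.Tendsto (fun t => (1 / t) * ∫ τ in (0:ℝ)..t, φ τ)
      Filter.atTop (nhds 0))
    (μ : ℝ → ℝ) (hμC1 : ContDiffOn ℝ 1 μ (Set.Ici 0)) (hμ0 : μ 0 = 0)
    (hμpos : ∀ x : ℝ, 0 < x → 0 < μ x) (hμle : ∀ x : ℝ, 0 ≤ x → μ x ≤ 1)
    (hcond : g < D * α * (α₂ / (α₁ + α₂ + α * (D + a))) + d)
    (s m₁ m₂ : ℝ → ℝ)
    (hsol : ∀ t ∈ (Set.Ici (0:ℝ)),
        HasDerivWithinAt s ((D + φ t) * (sIn - α * s t) - c * μ (s t) * (m₁ t + m₂ t) + r * d * m₁ t) (Set.Ici (0:ℝ)) t ∧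
        HasDerivWithinAt m₁ (m₁ t * (-d - α * (D + φ t) + g * μ (s t) - r₁ * m₁ t - r₂ * m₂ t - α₁) + α₂ * m₂ t) (Set.Ici (0:ℝ)) t ∧
        HasDerivWithinAt m₂ (m₂ t * (-d + g * μ (s t) - r₁ * m₁ t - r₂ * m₂ t - α₂) + α₁ * m₁ t) (Set.Ici (0:ℝ)) t)
    (hoct : ∀ t ∈ (Set.Ici (0:ℝ)), 0 ≤ s t ∧ 0 ≤ m₁ t ∧ 0 ≤ m₂ t)
    (hm₁0 : 0 < m₁ 0) (hm₂0 : 0 < m₂ 0) :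
    Filter.Tendsto (fun t => m₁ t + m₂ t) Filter.atTop (nhds 0) := by
  have hD0 : 0 < D := ha.trans hDa
  have hαD : 0 < α * D := mul_pos hα hD0
  set K : ℝ := α₁ + α₂ + α * (D + a) with hKdef
  have hK : 0 < K := by positivity
  set pinf : ℝ := α₂ / K with hpinfdef
  have hpinf : 0 < pinf := div_pos hα₂ hK
  have hKpinf : K * pinf = α₂ := mul_div_cancel₀ _ hK.ne'
  have hcond' : g - d < α * D * pinf := by nlinarith [hcond]
  set ρ : ℝ := max ((g - d + α * D * pinf) / (2 * (α * D))) (pinf / 2) with hρdef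
  have hρpos : 0 < ρ := lt_of_lt_of_le (half_pos hpinf) (le_max_right _ _)
  have hρlt : ρ < pinf := by
    apply max_lt
    · rw [div_lt_iff₀ (by positivity)]; nlinarith
    · linarith
  have hβneg : g - d - α * D * ρ < 0 := by
    have h1 := le_max_left ((g - d + α * D * pinf) / (2 * (α * D))) (pinf / 2)
    rw [div_le_iff₀ (by positivity)] at h1
    nlinarith
  clear_value K pinf ρ
  -- basic sign facts
  have hm1 : ∀ t ∈ Set.Ici (0:ℝ), 0 ≤ m₁ t := fun t ht => (hoct t ht).2.1
  have hm2 : ∀ t ∈ Set.Ici (0:ℝ), 0 ≤ m₂ t := fun t ht => (hoct t ht).2.2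
  have hμnn : ∀ t ∈ Set.Ici (0:ℝ), 0 ≤ μ (s t) := by
    intro t ht
    rcases eq_or_lt_of_le (hoct t ht).1 with h | h
    · rw [← h, hμ0]
    · exact (hμpos _ h).le
  have hμ1 : ∀ t ∈ Set.Ici (0:ℝ), μ (s t) ≤ 1 := fun t ht => hμle _ (hoct t ht).1
  have hφle : ∀ t ∈ Set.Ici (0:ℝ), φ t ≤ a := fun t ht => (hφbdd t ht).2
  have hφge : ∀ t ∈ Set.Ici (0:ℝ), -a ≤ φ t := fun t ht => (hφbdd t ht).1
  have hDφ : ∀ t ∈ Set.Ici (0:ℝ), 0 < D + φ t := by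
    intro t ht; have := hφge t ht; linarith
  -- derivative of z = m₁ + m₂
  have hZd : ∀ t ∈ Set.Ici (0:ℝ), HasDerivWithinAt (fun u => m₁ u + m₂ u)
      ((m₁ t + m₂ t) * (-d + g * μ (s t) - r₁ * m₁ t - r₂ * m₂ t) - α * (D + φ t) * m₁ t)
      (Set.Ici 0) t := by
    intro t ht
    have h := ((hsol t ht).2.1).add ((hsol t ht).2.2)
    exact h.congr_deriv (by ring)
  -- positivity of z
  have hZpos : ∀ t ∈ Set.Ici (0:ℝ), 0 < m₁ t + m₂ t := by
    intro t₀ ht₀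
    have hsub : Set.Icc (0:ℝ) t₀ ⊆ Set.Ici 0 := fun u hu => hu.1
    have hcont : ContinuousOn (fun u => m₁ u + m₂ u) (Set.Icc 0 t₀) :=
      fun u hu => ((hZd u (hsub hu)).continuousWithinAt).mono hsub
    obtain ⟨x, hx, hmax⟩ := isCompact_Icc.exists_isMaxOn ⟨0, Set.left_mem_Icc.2 ht₀⟩ hcont
    set M : ℝ := m₁ x + m₂ x with hMdef
    have hM0 : 0 ≤ M := add_nonneg (hm1 x (hsub hx)) (hm2 x (hsub hx))
    set K₀ : ℝ := d + α * (D + a) + (r₁ + r₂) * M with hK₀def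
    have hK₀ : 0 < K₀ := by positivity
    have hMb : ∀ u ∈ Set.Icc (0:ℝ) t₀, m₁ u + m₂ u ≤ M := fun u hu => hmax hu
    clear_value M K₀
    have key : (m₁ 0 + m₂ 0) * Real.exp (K₀ * 0) ≤ (m₁ t₀ + m₂ t₀) * Real.exp (K₀ * t₀) := by
      apply le_of_deriv_nonneg' (f := fun t => (m₁ t + m₂ t) * Real.exp (K₀ * t)) (f' := fun t =>
        ((m₁ t + m₂ t) * (-d + g * μ (s t) - r₁ * m₁ t - r₂ * m₂ t) - α * (D + φ t) * m₁ t)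
          * Real.exp (K₀ * t) + (m₁ t + m₂ t) * (Real.exp (K₀ * t) * (K₀ * 1))) ht₀
      · intro t ht
        exact ((hZd t (hsub ht)).mono hsub).mul
          ((((hasDerivAt_id t).const_mul K₀).exp).hasDerivWithinAt)
      · intro t ht
        have ht' : t ∈ Set.Ici (0:ℝ) := hsub ht
        have h1 : 0 ≤ ((m₁ t + m₂ t) * (-d + g * μ (s t) - r₁ * m₁ t - r₂ * m₂ t)
            - α * (D + φ t) * m₁ t) + (m₁ t + m₂ t) * K₀ := by
          have hb : m₁ t + m₂ t ≤ M := hMb t ht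
          have h2 := hm1 t ht'
          have h3 := hm2 t ht'
          have h4 := hμnn t ht'
          have h5 := hφle t ht'
          have e1 : 0 ≤ (m₁ t + m₂ t) * (g * μ (s t)) :=
            mul_nonneg (add_nonneg h2 h3) (mul_nonneg hg.le h4)
          have e2 : 0 ≤ (r₁ * m₂ t + r₂ * m₁ t) * (m₁ t + m₂ t) :=
            mul_nonneg (add_nonneg (mul_nonneg hr₁.le h3) (mul_nonneg hr₂.le h2))
              (add_nonneg h2 h3)
          have e3 : 0 ≤ (r₁ + r₂) * ((m₁ t + m₂ t) * (M - (m₁ t + m₂ t))) :=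
            mul_nonneg (by linarith) (mul_nonneg (add_nonneg h2 h3) (by linarith))
          have e4 : 0 ≤ α * (m₁ t * (a - φ t)) :=
            mul_nonneg hα.le (mul_nonneg h2 (by linarith))
          have e5 : 0 ≤ α * (m₂ t * (D + a)) :=
            mul_nonneg hα.le (mul_nonneg h3 (by linarith))
          rw [hK₀def]
          nlinarith [e1, e2, e3, e4, e5]
        have h2 := mul_nonneg h1 (Real.exp_pos (K₀ * t)).le
        nlinarith [h2]
    have he0 : Real.exp (K₀ * 0) = 1 := by norm_num
    have hep := Real.exp_pos (K₀ * t₀)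
    nlinarith [key, mul_pos (by linarith : (0:ℝ) < m₁ 0 + m₂ 0) hep]
  have hZne : ∀ t ∈ Set.Ici (0:ℝ), (m₁ t + m₂ t) ≠ 0 := fun t ht => (hZpos t ht).ne'
  -- ratio lower bound : m₁ t ≥ pinf (1 - e^{-Kt}) (m₁ + m₂)
  have hratio : ∀ t ∈ Set.Ici (0:ℝ),
      pinf * (1 - Real.exp (-(K * t))) * (m₁ t + m₂ t) ≤ m₁ t := by
    intro t₀ ht₀
    have hsub : Set.Icc (0:ℝ) t₀ ⊆ Set.Ici 0 := fun u hu => hu.1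
    have key : (m₁ 0 / (m₁ 0 + m₂ 0) - pinf) * Real.exp (K * 0) ≤
        (m₁ t₀ / (m₁ t₀ + m₂ t₀) - pinf) * Real.exp (K * t₀) := by
      apply le_of_deriv_nonneg'
        (f := fun t => (m₁ t / (m₁ t + m₂ t) - pinf) * Real.exp (K * t)) (f' := fun t =>
        (((m₁ t * (-d - α * (D + φ t) + g * μ (s t) - r₁ * m₁ t - r₂ * m₂ t - α₁) + α₂ * m₂ t)
            * (m₁ t + m₂ t) - m₁ t *
            ((m₁ t + m₂ t) * (-d + g * μ (s t) - r₁ * m₁ t - r₂ * m₂ t) - α * (D + φ t) * m₁ t))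
          / (m₁ t + m₂ t) ^ 2) * Real.exp (K * t)
          + (m₁ t / (m₁ t + m₂ t) - pinf) * (Real.exp (K * t) * (K * 1))) ht₀
      · intro t ht
        have ht' : t ∈ Set.Ici (0:ℝ) := hsub ht
        exact ((((hsol t ht').2.1).mono hsub).div ((hZd t ht').mono hsub)
          (hZne t ht')).sub_const pinf |>.mul
          ((((hasDerivAt_id t).const_mul K).exp).hasDerivWithinAt)
      · intro t ht
        have ht' : t ∈ Set.Ici (0:ℝ) := hsub ht
        have hzt := hZpos t ht'
        have h2 := hm1 t ht'
        have h3 := hm2 t ht'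
        have h5 := hφle t ht'
        have h6 := hDφ t ht'
        have hN : 0 ≤ (m₁ t * (-d - α * (D + φ t) + g * μ (s t) - r₁ * m₁ t - r₂ * m₂ t - α₁)
            + α₂ * m₂ t) * (m₁ t + m₂ t) - m₁ t *
            ((m₁ t + m₂ t) * (-d + g * μ (s t) - r₁ * m₁ t - r₂ * m₂ t) - α * (D + φ t) * m₁ t)
            + K * m₁ t * (m₁ t + m₂ t) - α₂ * (m₁ t + m₂ t) ^ 2 := by
          have heq : (m₁ t * (-d - α * (D + φ t) + g * μ (s t) - r₁ * m₁ t - r₂ * m₂ t - α₁)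
              + α₂ * m₂ t) * (m₁ t + m₂ t) - m₁ t *
              ((m₁ t + m₂ t) * (-d + g * μ (s t) - r₁ * m₁ t - r₂ * m₂ t) - α * (D + φ t) * m₁ t)
              + K * m₁ t * (m₁ t + m₂ t) - α₂ * (m₁ t + m₂ t) ^ 2
              = m₁ t * ((m₁ t + m₂ t) * (α * (a - φ t)) + α * (D + φ t) * m₁ t) := by
            rw [hKdef]; ring
          rw [heq]
          have hf1 : 0 ≤ (m₁ t + m₂ t) * (α * (a - φ t)) :=
            mul_nonneg (by linarith) (mul_nonneg hα.le (by linarith))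
          have hf2 : 0 ≤ α * (D + φ t) * m₁ t :=
            mul_nonneg (mul_nonneg hα.le h6.le) h2
          exact mul_nonneg h2 (by linarith)
        have heq2 : (((m₁ t * (-d - α * (D + φ t) + g * μ (s t) - r₁ * m₁ t - r₂ * m₂ t - α₁)
            + α₂ * m₂ t) * (m₁ t + m₂ t) - m₁ t *
            ((m₁ t + m₂ t) * (-d + g * μ (s t) - r₁ * m₁ t - r₂ * m₂ t) - α * (D + φ t) * m₁ t))
            / (m₁ t + m₂ t) ^ 2) * Real.exp (K * t)
            + (m₁ t / (m₁ t + m₂ t) - pinf) * (Real.exp (K * t) * (K * 1))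
            = (((m₁ t * (-d - α * (D + φ t) + g * μ (s t) - r₁ * m₁ t - r₂ * m₂ t - α₁)
            + α₂ * m₂ t) * (m₁ t + m₂ t) - m₁ t *
            ((m₁ t + m₂ t) * (-d + g * μ (s t) - r₁ * m₁ t - r₂ * m₂ t) - α * (D + φ t) * m₁ t)
            + K * m₁ t * (m₁ t + m₂ t) - α₂ * (m₁ t + m₂ t) ^ 2)
            / (m₁ t + m₂ t) ^ 2) * Real.exp (K * t) := by
          rw [hpinfdef]
          field_simp
          ring
        rw [heq2]
        exact mul_nonneg (div_nonneg hN (sq_nonneg _)) (Real.exp_pos _).le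
    -- unpack key
    have hz0 : 0 < m₁ 0 + m₂ 0 := by linarith
    have hq0 : -pinf ≤ m₁ 0 / (m₁ 0 + m₂ 0) - pinf := by
      have : 0 ≤ m₁ 0 / (m₁ 0 + m₂ 0) := div_nonneg hm₁0.le hz0.le
      linarith
    have he0 : Real.exp (K * 0) = 1 := by norm_num
    rw [he0, mul_one] at key
    have hept := Real.exp_pos (K * t₀)
    have hkey2 : -pinf ≤ (m₁ t₀ / (m₁ t₀ + m₂ t₀) - pinf) * Real.exp (K * t₀) :=
      le_trans hq0 key
    -- so p t₀ ≥ pinf - pinf * exp (-(K t₀))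
    have hp_lb : pinf * (1 - Real.exp (-(K * t₀))) ≤ m₁ t₀ / (m₁ t₀ + m₂ t₀) := by
      have hexp : Real.exp (-(K * t₀)) = (Real.exp (K * t₀))⁻¹ := Real.exp_neg _
      have h7 : -pinf / Real.exp (K * t₀) ≤ m₁ t₀ / (m₁ t₀ + m₂ t₀) - pinf :=
        (div_le_iff₀ hept).2 hkey2
      have h8 : -pinf / Real.exp (K * t₀) = -(pinf * (Real.exp (K * t₀))⁻¹) := by ring
      rw [hexp]
      nlinarith [h7, h8]
    have hzt := hZpos t₀ ht₀
    calc pinf * (1 - Real.exp (-(K * t₀))) * (m₁ t₀ + m₂ t₀)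
        ≤ (m₁ t₀ / (m₁ t₀ + m₂ t₀)) * (m₁ t₀ + m₂ t₀) :=
          mul_le_mul_of_nonneg_right hp_lb hzt.le
      _ = m₁ t₀ := div_mul_cancel₀ _ (hZne t₀ ht₀)
  -- choose T beyond which the ratio m₁/(m₁+m₂) is at least ρ
  have hδ : 0 < (pinf - ρ) / pinf := div_pos (by linarith) hpinf
  have htend : Tendsto (fun t : ℝ => Real.exp (-(K * t))) atTop (nhds 0) :=
    Real.tendsto_exp_atBot.comp
      (tendsto_neg_atBot_iff.2 ((tendsto_const_mul_atTop_of_pos hK).2 tendsto_id))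
  obtain ⟨T₁, hT₁⟩ := eventually_atTop.1 (htend.eventually_lt_const hδ)
  set T : ℝ := max T₁ 0 with hTdef
  have hT0 : (0:ℝ) ≤ T := le_max_right _ _
  have hT₁T : T₁ ≤ T := le_max_left _ _
  clear_value T
  have hm₁ρ : ∀ t, T ≤ t → ρ * (m₁ t + m₂ t) ≤ m₁ t := by
    intro t htT
    have ht0 : t ∈ Set.Ici (0:ℝ) := Set.mem_Ici.2 (le_trans hT0 htT)
    have hr := hratio t ht0
    have he : Real.exp (-(K * t)) < (pinf - ρ) / pinf :=
      hT₁ t (le_trans hT₁T htT)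
    have he2 : Real.exp (-(K * t)) * pinf < pinf - ρ := (lt_div_iff₀ hpinf).1 he
    have hρle : ρ ≤ pinf * (1 - Real.exp (-(K * t))) := by
      have hre : pinf * (1 - Real.exp (-(K * t))) = pinf - Real.exp (-(K * t)) * pinf := by ring
      linarith only [he2, hre]
    have hznn : 0 ≤ m₁ t + m₂ t := (hZpos t ht0).le
    calc ρ * (m₁ t + m₂ t)
        ≤ pinf * (1 - Real.exp (-(K * t))) * (m₁ t + m₂ t) :=
          mul_le_mul_of_nonneg_right hρle hznn
      _ ≤ m₁ t := hr
  -- the integrated noise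
  have hφt : Continuous (fun u : ℝ => φ (max u 0)) :=
    hφcont.comp_continuous (continuous_id.max continuous_const) (fun x => le_max_right x 0)
  set Φ : ℝ → ℝ := fun t => ∫ τ in (0:ℝ)..t, φ (max τ 0) with hΦdef
  have hΦd : ∀ t : ℝ, HasDerivAt Φ (φ (max t 0)) t := by
    intro t
    rw [hΦdef]
    exact (hφt.integral_hasStrictDerivAt 0 t).hasDerivAt
  have hΦeq : ∀ t : ℝ, Φ t = ∫ τ in (0:ℝ)..t, φ (max τ 0) := fun t => by rw [hΦdef]
  clear_value Φ
  set C₁ : ℝ := d - g + α * ρ * D with hC₁def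
  clear_value C₁
  have hC₁pos : 0 < C₁ := by rw [hC₁def]; nlinarith [hβneg]
  -- the logarithmic Lyapunov bound is decreasing on [T, ∞)
  have hG : ∀ t, T ≤ t →
      Real.log (m₁ t + m₂ t) + C₁ * t + α * ρ * Φ t ≤
      Real.log (m₁ T + m₂ T) + C₁ * T + α * ρ * Φ T := by
    intro b hb
    have hsub : Set.Icc T b ⊆ Set.Ici (0:ℝ) := fun u hu => Set.mem_Ici.2 (le_trans hT0 hu.1)
    have key : -(Real.log (m₁ T + m₂ T) + C₁ * T + α * ρ * Φ T) ≤
        -(Real.log (m₁ b + m₂ b) + C₁ * b + α * ρ * Φ b) := by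
      apply le_of_deriv_nonneg'
        (f := fun u => -(Real.log (m₁ u + m₂ u) + C₁ * u + α * ρ * Φ u))
        (f' := fun u => -(((m₁ u + m₂ u) * (-d + g * μ (s u) - r₁ * m₁ u - r₂ * m₂ u)
            - α * (D + φ u) * m₁ u) / (m₁ u + m₂ u) + C₁ * 1 + α * ρ * φ (max u 0))) hb
      · intro u hu
        have hu' : u ∈ Set.Ici (0:ℝ) := hsub hu
        exact (((((hZd u hu').mono hsub).log (hZne u hu')).add
          (((hasDerivAt_id u).const_mul C₁).hasDerivWithinAt)).add
          ((hΦd u).hasDerivWithinAt.const_mul (α * ρ))).neg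
      · intro u hu
        have hu' : u ∈ Set.Ici (0:ℝ) := hsub hu
        have hu0 : (0:ℝ) ≤ u := Set.mem_Ici.1 hu'
        have hzt := hZpos u hu'
        have hmax0 : max u 0 = u := max_eq_left hu0
        have h2 := hm1 u hu'
        have h3 := hm2 u hu'
        have h4 := hμ1 u hu'
        have h6 := hDφ u hu'
        have h7 : ρ * (m₁ u + m₂ u) ≤ m₁ u := hm₁ρ u hu.1
        have hZd_le : (m₁ u + m₂ u) * (-d + g * μ (s u) - r₁ * m₁ u - r₂ * m₂ u)
            - α * (D + φ u) * m₁ u ≤ (g - d - α * ρ * (D + φ u)) * (m₁ u + m₂ u) := by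
          have e1 : (m₁ u + m₂ u) * (g * μ (s u)) ≤ (m₁ u + m₂ u) * g :=
            mul_le_mul_of_nonneg_left (mul_le_of_le_one_right hg.le h4) (add_nonneg h2 h3)
          have e2 : 0 ≤ (m₁ u + m₂ u) * (r₁ * m₁ u + r₂ * m₂ u) :=
            mul_nonneg (add_nonneg h2 h3)
              (add_nonneg (mul_nonneg hr₁.le h2) (mul_nonneg hr₂.le h3))
          have e3 : α * (D + φ u) * (ρ * (m₁ u + m₂ u)) ≤ α * (D + φ u) * m₁ u :=
            mul_le_mul_of_nonneg_left h7 (mul_nonneg hα.le h6.le)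
          have hre : (g - d - α * ρ * (D + φ u)) * (m₁ u + m₂ u) =
              (m₁ u + m₂ u) * g - d * (m₁ u + m₂ u) - α * (D + φ u) * (ρ * (m₁ u + m₂ u)) := by
            ring
          have hlhs : (m₁ u + m₂ u) * (-d + g * μ (s u) - r₁ * m₁ u - r₂ * m₂ u)
              - α * (D + φ u) * m₁ u = (m₁ u + m₂ u) * (g * μ (s u)) - d * (m₁ u + m₂ u)
              - (m₁ u + m₂ u) * (r₁ * m₁ u + r₂ * m₂ u) - α * (D + φ u) * m₁ u := by
            ring
          linarith only [e1, e2, e3, hre, hlhs]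
        have h8 : ((m₁ u + m₂ u) * (-d + g * μ (s u) - r₁ * m₁ u - r₂ * m₂ u)
            - α * (D + φ u) * m₁ u) / (m₁ u + m₂ u) ≤ g - d - α * ρ * (D + φ u) := by
          rw [div_le_iff₀ hzt]
          linarith only [hZd_le]
        rw [hmax0]
        have h9 : ((m₁ u + m₂ u) * (-d + g * μ (s u) - r₁ * m₁ u - r₂ * m₂ u)
            - α * (D + φ u) * m₁ u) / (m₁ u + m₂ u) + C₁ * 1 + α * ρ * φ u ≤ 0 := by
          have h10 : (g - d - α * ρ * (D + φ u)) + (d - g + α * ρ * D) * 1 + α * ρ * φ u = 0 := by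
            ring
          rw [hC₁def]
          linarith only [h8, h10]
        linarith only [h9]
    linarith only [key]
  -- conclude
  set CT : ℝ := Real.log (m₁ T + m₂ T) + C₁ * T + α * ρ * Φ T with hCTdef
  clear_value CT
  have hlogle : ∀ t, T ≤ t → Real.log (m₁ t + m₂ t) ≤ CT - C₁ * t - α * ρ * Φ t := by
    intro t ht
    have := hG t ht
    rw [hCTdef]
    linarith
  have hΦavg : Tendsto (fun t => (1 / t) * Φ t) atTop (nhds 0) := by
    apply Filter.Tendsto.congr' _ hφavg
    filter_upwards [eventually_ge_atTop (0:ℝ)] with t ht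
    have : (∫ τ in (0:ℝ)..t, φ τ) = ∫ τ in (0:ℝ)..t, φ (max τ 0) := by
      apply intervalIntegral.integral_congr
      intro τ hτ
      rw [Set.uIcc_of_le ht] at hτ
      simp only
      rw [max_eq_left hτ.1]
    rw [this, ← hΦeq t]
  have hu : Tendsto (fun t => -C₁ - α * ρ * ((1 / t) * Φ t)) atTop (nhds (-C₁)) := by
    have h := hΦavg.const_mul (α * ρ)
    have h2 := (tendsto_const_nhds (x := -C₁) (f := atTop)).sub h
    simpa using h2
  have hev2 : ∀ᶠ t in atTop, -C₁ - α * ρ * ((1 / t) * Φ t) < -C₁ / 2 :=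
    hu.eventually_lt_const (by linarith)
  have hev3 : ∀ᶠ t in atTop, Real.log (m₁ t + m₂ t) ≤ CT + (-C₁ / 2) * t := by
    filter_upwards [hev2, eventually_ge_atTop T, eventually_gt_atTop (0:ℝ)] with t h1 h2 h3
    have h4 := hlogle t h2
    have heq : CT - C₁ * t - α * ρ * Φ t = CT + t * (-C₁ - α * ρ * ((1 / t) * Φ t)) := by
      field_simp
      ring
    rw [heq] at h4
    have h5 : t * (-C₁ - α * ρ * ((1 / t) * Φ t)) ≤ t * (-C₁ / 2) :=
      mul_le_mul_of_nonneg_left h1.le h3.le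
    have h6 : t * (-C₁ / 2) = -C₁ / 2 * t := by ring
    linarith only [h4, h5, h6]
  have hbot : Tendsto (fun t => CT + (-C₁ / 2) * t) atTop atBot :=
    tendsto_atBot_add_const_left _ CT
      ((tendsto_const_mul_atBot_of_neg (by linarith)).2 tendsto_id)
  have hlog : Tendsto (fun t => Real.log (m₁ t + m₂ t)) atTop atBot :=
    tendsto_atBot_mono' atTop hev3 hbot
  have hfin : Tendsto (fun t => Real.exp (Real.log (m₁ t + m₂ t))) atTop (nhds 0) :=
    Real.tendsto_exp_atBot.comp hlog
  apply Filter.Tendsto.congr' _ hfin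
  filter_upwards [eventually_ge_atTop (0:ℝ)] with t ht
  exact Real.exp_log (hZpos t (Set.mem_Ici.2 ht))
end

section
/- Assume ϑ := min{α D_min, d + α D_min − g c⁻¹ r d, d} > 0. Then there exists s* > 0, depending only on the parameters (not on the noise path φ or on the solution), such that for every solution (s, m₁, m₂) of the random chemostat system on [0, ∞) with values in ℝ³₊ there exists T > 0 with s(t) ≥ s* for all t ≥ T. Moreover, s* can be taken so that the continuous function f(σ) := D_min s_in − α D_max σ − μ(σ)(g D_max s_in/ϑ + ε) (for a suitable fixed ε > 0) is strictly positive on [0, s*]. -/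
open Set

/-- Gronwall-type decay. -/
lemma aux_decay (ϑ A ε₀ : ℝ) (hϑ : 0 < ϑ) (hε₀ : 0 < ε₀) (v v' : ℝ → ℝ)
    (hv : ∀ t ∈ Set.Ici (0:ℝ), HasDerivWithinAt v (v' t) (Set.Ici 0) t)
    (hb : ∀ t ∈ Set.Ici (0:ℝ), v' t ≤ A - ϑ * v t) :
    ∀ t ∈ Set.Ici (0:ℝ), v t ≤ A/ϑ + ε₀ + (v 0 - A/ϑ) * Real.exp (-ϑ * t) := by
  intro b hb0
  set C0 := v 0 - A/ϑ with hC0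
  have hB : ∀ x : ℝ, HasDerivAt (fun t => A/ϑ + ε₀ + C0 * Real.exp (-ϑ*t))
      (C0 * (Real.exp (-ϑ*x) * (-ϑ))) x := by
    intro x
    have h1 : HasDerivAt (fun t : ℝ => -ϑ*t) (-ϑ) x := by
      simpa using (hasDerivAt_id x).const_mul (-ϑ)
    exact (h1.exp.const_mul C0).const_add _
  have hcont : ContinuousOn v (Icc 0 b) := fun x hx =>
    ((hv x hx.1).continuousWithinAt).mono Icc_subset_Ici_self
  have hder : ∀ x ∈ Ico 0 b, HasDerivWithinAt v (v' x) (Ici x) x := fun x hx =>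
    (hv x hx.1).mono (Ici_subset_Ici.mpr hx.1)
  have ha : v 0 ≤ A/ϑ + ε₀ + C0 * Real.exp (-ϑ*0) := by
    simp only [mul_zero, Real.exp_zero, mul_one]
    rw [hC0]; linarith
  have bound : ∀ x ∈ Ico 0 b, v x = A/ϑ + ε₀ + C0 * Real.exp (-ϑ*x) →
      v' x < C0 * (Real.exp (-ϑ*x) * (-ϑ)) := by
    intro x hx heq
    have h1 := hb x hx.1
    have hAd : ϑ * (A/ϑ) = A := mul_div_cancel₀ A hϑ.ne'
    rw [heq] at h1
    have hexp : ϑ * (A/ϑ + ε₀ + C0 * Real.exp (-ϑ*x))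
        = A + ϑ*ε₀ + ϑ*(C0 * Real.exp (-ϑ*x)) := by
      rw [mul_add, mul_add, hAd]
    rw [hexp] at h1
    have h2 : C0 * (Real.exp (-ϑ*x) * (-ϑ)) = -(ϑ*(C0 * Real.exp (-ϑ*x))) := by ring
    rw [h2]
    nlinarith [mul_pos hϑ hε₀]
  have H := image_le_of_deriv_right_lt_deriv_boundary hcont hder ha hB bound
  exact H ⟨hb0, le_rfl⟩

/-- Growth lemma. -/
lemma aux_grow (v v' : ℝ → ℝ) (a b δ : ℝ) (hab : a ≤ b) (hδ : 0 < δ)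
    (hc : ContinuousOn v (Set.Icc a b))
    (hd : ∀ x ∈ Set.Ico a b, HasDerivWithinAt v (v' x) (Set.Ici x) x)
    (hlo : ∀ x ∈ Set.Ico a b, δ ≤ v' x) :
    v a + δ/2 * (b - a) ≤ v b := by
  have hfc : ContinuousOn (fun t => v a + δ/2*(t-a) - v t) (Icc a b) :=
    ((continuousOn_const.add ((continuousOn_id.sub continuousOn_const).const_smul (δ/2)))).sub hc
  have hfd : ∀ x ∈ Ico a b, HasDerivWithinAt (fun t => v a + δ/2*(t-a) - v t)
      (δ/2 - v' x) (Ici x) x := by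
    intro x hx
    have h1 : HasDerivWithinAt (fun t => v a + δ/2*(t-a)) (δ/2) (Ici x) x := by
      simpa using (((hasDerivWithinAt_id x (Ici x)).sub_const a).const_mul (δ/2)).const_add (v a)
    exact h1.sub (hd x hx)
  have hB : ∀ x ∈ Ico a b, HasDerivWithinAt (fun _ : ℝ => (0:ℝ)) ((fun _ => (0:ℝ)) x) (Ici x) x :=
    fun x _ => hasDerivWithinAt_const x _ 0
  have bound : ∀ x ∈ Ico a b, (v a + δ/2*(x-a) - v x) = 0 → δ/2 - v' x < 0 := by
    intro x hx _
    have := hlo x hx; linarith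
  have H := image_le_of_deriv_right_lt_deriv_boundary' hfc hfd (by simp) continuousOn_const hB bound
  have := H ⟨hab, le_rfl⟩
  linarith

/-- Stay-above lemma. -/
lemma aux_stay (v v' : ℝ → ℝ) (t₁ K δ : ℝ) (hδ : 0 < δ)
    (hc : ContinuousOn v (Set.Ici t₁))
    (hd : ∀ x ∈ Set.Ici t₁, HasDerivWithinAt v (v' x) (Set.Ici x) x)
    (hlo : ∀ x ∈ Set.Ici t₁, v x ≤ K → δ ≤ v' x)
    (h1 : K ≤ v t₁) : ∀ t ∈ Set.Ici t₁, K ≤ v t := by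
  intro t ht
  have hfc : ContinuousOn (fun x => -v x) (Icc t₁ t) :=
    (hc.mono Icc_subset_Ici_self).neg
  have hfd : ∀ x ∈ Ico t₁ t, HasDerivWithinAt (fun x => -v x) (-(v' x)) (Ici x) x :=
    fun x hx => (hd x hx.1).neg
  have hB : ∀ x ∈ Ico t₁ t, HasDerivWithinAt (fun _ : ℝ => -K) ((fun _ => (0:ℝ)) x) (Ici x) x :=
    fun x _ => hasDerivWithinAt_const x _ _
  have bound : ∀ x ∈ Ico t₁ t, -v x = -K → -(v' x) < 0 := by
    intro x hx heq
    have hvx : v x ≤ K := by linarith [neg_injective heq]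
    have := hlo x hx.1 hvx
    linarith
  have H := image_le_of_deriv_right_lt_deriv_boundary' hfc hfd (by linarith) continuousOn_const hB bound
  have := H ⟨ht, le_rfl⟩
  simpa using this

open Set

set_option maxHeartbeats 1000000 in
/-- If `ϑ > 0`, there is `s* > 0`, depending only on the parameters, such
that every nonnegative global solution (for any admissible noise path) eventually satisfies
`s(t) ≥ s*`; moreover `s*` can be chosen so that, for a suitable `ε > 0`, the function
`f(σ) = D_min s_in − α D_max σ − μ(σ)(g D_max s_in/ϑ + ε)` is strictly positive on `[0, s*]`. -/
theorem random_chemostat_substrate_persistence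
    (D a sIn c g d r α α₁ α₂ r₁ r₂ : ℝ)
    (ha : 0 < a) (hDa : a < D) (hsIn : 0 < sIn) (hc : 0 < c)
    (hg : 0 < g) (hgc : g ≤ c) (hd : 0 < d) (hr0 : 0 < r) (hr1 : r < 1)
    (hα : 0 < α) (hα₁ : 0 ≤ α₁) (hα₂ : 0 ≤ α₂) (hr₁ : 0 < r₁) (hr₂ : 0 < r₂)
    (μ : ℝ → ℝ) (hμC1 : ContDiffOn ℝ 1 μ (Set.Ici 0)) (hμ0 : μ 0 = 0)
    (hμpos : ∀ x : ℝ, 0 < x → 0 < μ x) (hμle : ∀ x : ℝ, 0 ≤ x → μ x ≤ 1)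
    (ϑ : ℝ) (hϑdef : ϑ = min (α * (D - a)) (min (d + α * (D - a) - g * c⁻¹ * r * d) d))
    (hϑpos : 0 < ϑ) :
    ∃ sstar : ℝ, 0 < sstar ∧ ∃ ε : ℝ, 0 < ε ∧
      (∀ σ ∈ Set.Icc (0:ℝ) sstar,
        0 < (D - a) * sIn - α * (D + a) * σ - μ σ * (g * (D + a) * sIn / ϑ + ε)) ∧
      (∀ φ : ℝ → ℝ, ContinuousOn φ (Set.Ici 0) →
        (∀ t ∈ Set.Ici (0:ℝ), φ t ∈ Set.Icc (-a) a) →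
        ∀ s m₁ m₂ : ℝ → ℝ,
          (∀ t ∈ (Set.Ici (0:ℝ)),
            HasDerivWithinAt s ((D + φ t) * (sIn - α * s t) - c * μ (s t) * (m₁ t + m₂ t) + r * d * m₁ t) (Set.Ici (0:ℝ)) t ∧
            HasDerivWithinAt m₁ (m₁ t * (-d - α * (D + φ t) + g * μ (s t) - r₁ * m₁ t - r₂ * m₂ t - α₁) + α₂ * m₂ t) (Set.Ici (0:ℝ)) t ∧
            HasDerivWithinAt m₂ (m₂ t * (-d + g * μ (s t) - r₁ * m₁ t - r₂ * m₂ t - α₂) + α₁ * m₁ t) (Set.Ici (0:ℝ)) t) →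
          (∀ t ∈ (Set.Ici (0:ℝ)), 0 ≤ s t ∧ 0 ≤ m₁ t ∧ 0 ≤ m₂ t) →
          ∃ T : ℝ, 0 < T ∧ ∀ t ≥ T, sstar ≤ s t) := by
  -- basic facts about ϑ
  have hϑ1 : ϑ ≤ α * (D - a) := hϑdef ▸ min_le_left _ _
  have hϑ2 : ϑ ≤ d + α * (D - a) - g * c⁻¹ * r * d :=
    hϑdef ▸ le_trans (min_le_right _ _) (min_le_left _ _)
  have hϑ3 : ϑ ≤ d := hϑdef ▸ le_trans (min_le_right _ _) (min_le_right _ _)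
  have hϑ2c : ϑ * c ≤ c * d + c * (α * (D - a)) - g * r * d := by
    have h := mul_le_mul_of_nonneg_right hϑ2 hc.le
    have he : (d + α * (D - a) - g * c⁻¹ * r * d) * c
        = c * d + c * (α * (D - a)) - g * r * d := by
      field_simp
    rw [he] at h; exact h
  have hμnn : ∀ x : ℝ, 0 ≤ x → 0 ≤ μ x := by
    intro x hx
    rcases hx.eq_or_lt with h | h
    · rw [← h, hμ0]
    · exact (hμpos x h).le
  -- constants
  have hApos : 0 < g * (D + a) * sIn :=
    mul_pos (mul_pos hg (by linarith)) hsIn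
  have hδpos : 0 < (D - a) * sIn / 2 := by
    have : 0 < (D - a) * sIn := mul_pos (by linarith) hsIn
    linarith
  -- abbreviations (opaque, with pointwise equations)
  obtain ⟨A, hA⟩ : ∃ A : ℝ, A = g * (D + a) * sIn := ⟨_, rfl⟩
  obtain ⟨K, hK⟩ : ∃ K : ℝ, K = g * (D + a) * sIn / ϑ + 1 := ⟨_, rfl⟩
  obtain ⟨δ, hδ⟩ : ∃ δ : ℝ, δ = (D - a) * sIn / 2 := ⟨_, rfl⟩
  rw [← hA] at hApos
  rw [← hδ] at hδpos
  have hKA : K = A / ϑ + 1 := by rw [hK, hA]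
  -- choose sstar via continuity of μ at 0
  have hμc0 : ContinuousWithinAt (fun σ => α * (D + a) * σ + μ σ * K) (Ici 0) 0 := by
    have h1 : ContinuousWithinAt μ (Ici 0) 0 :=
      (hμC1.continuousOn).continuousWithinAt self_mem_Ici
    exact ((continuous_const.mul continuous_id).continuousWithinAt).add
      (h1.mul continuousWithinAt_const)
  have hev : ∀ᶠ σ in nhdsWithin 0 (Ici 0), α * (D + a) * σ + μ σ * K < δ := by
    have := hμc0
    rw [ContinuousWithinAt] at this
    have h0 : α * (D + a) * 0 + μ 0 * K = 0 := by simp [hμ0]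
    rw [h0] at this
    exact this.eventually_lt_const hδpos
  obtain ⟨η, hη0, hsub⟩ := Metric.mem_nhdsWithin_iff.1 hev
  have hkey : ∀ x : ℝ, 0 ≤ x → x ≤ η/2 → α * (D + a) * x + μ x * K < δ := by
    intro x hx1 hx2
    have hmem : x ∈ Metric.ball (0:ℝ) η ∩ Ici 0 := by
      refine ⟨?_, hx1⟩
      rw [Metric.mem_ball, Real.dist_eq, sub_zero, abs_of_nonneg hx1]
      linarith
    exact hsub hmem
  refine ⟨η/2, by linarith, 1, one_pos, ?_, ?_⟩
  · -- positivity of f on [0, sstar]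
    intro σ hσ
    have h1 := hkey σ hσ.1 hσ.2
    rw [hK] at h1
    rw [hδ] at h1
    linarith
  · -- main dynamical part
    intro φ hφc hφm s m₁ m₂ hode hnn
    obtain ⟨v, hvfun, hvt⟩ : ∃ v : ℝ → ℝ, (v = fun t => g * s t + c * (m₁ t + m₂ t)) ∧
        ∀ t, v t = g * s t + c * (m₁ t + m₂ t) := ⟨_, rfl, fun _ => rfl⟩
    obtain ⟨vd, hvdt⟩ : ∃ vd : ℝ → ℝ, ∀ t, vd t =
        g * ((D + φ t) * (sIn - α * s t) - c * μ (s t) * (m₁ t + m₂ t) + r * d * m₁ t)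
        + c * ((m₁ t * (-d - α * (D + φ t) + g * μ (s t) - r₁ * m₁ t - r₂ * m₂ t - α₁) + α₂ * m₂ t)
             + (m₂ t * (-d + g * μ (s t) - r₁ * m₁ t - r₂ * m₂ t - α₂) + α₁ * m₁ t)) :=
      ⟨_, fun _ => rfl⟩
    have hvder : ∀ t ∈ Ici (0:ℝ), HasDerivWithinAt v (vd t) (Ici 0) t := by
      intro t ht
      rw [hvfun, hvdt t]
      exact ((hode t ht).1.const_mul g).add (((hode t ht).2.1.add (hode t ht).2.2).const_mul c)
    have hvb : ∀ t ∈ Ici (0:ℝ), vd t ≤ A - ϑ * v t := by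
      intro t ht
      obtain ⟨hs0, hm10, hm20⟩ := hnn t ht
      obtain ⟨hφ1, hφ2⟩ := hφm t ht
      have hDφ1 : D - a ≤ D + φ t := by linarith
      have hDφ2 : D + φ t ≤ D + a := by linarith
      have h1 : g * (D + φ t) * sIn ≤ A := by rw [hA]; nlinarith
      have h2 : ϑ * (g * s t) ≤ α * (D + φ t) * (g * s t) := by
        have hle : ϑ ≤ α * (D + φ t) := le_trans hϑ1 (by nlinarith)
        exact mul_le_mul_of_nonneg_right hle (mul_nonneg hg.le hs0)
      have h3 : ϑ * (c * m₁ t) ≤ c * d * m₁ t + c * (α * (D + φ t)) * m₁ t - g * r * d * m₁ t := by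
        have hcoef : ϑ * c ≤ c * d + c * (α * (D + φ t)) - g * r * d := by
          nlinarith [mul_le_mul_of_nonneg_left hDφ1 (by positivity : (0:ℝ) ≤ c * α)]
        nlinarith [mul_le_mul_of_nonneg_right hcoef hm10]
      have h4 : ϑ * (c * m₂ t) ≤ c * d * m₂ t := by
        nlinarith [mul_le_mul_of_nonneg_right hϑ3 (mul_nonneg hc.le hm20)]
      have h5 : 0 ≤ c * (r₁ * m₁ t + r₂ * m₂ t) * (m₁ t + m₂ t) := by positivity
      have hid : vd t = g * (D + φ t) * sIn - α * (D + φ t) * (g * s t) + g * r * d * m₁ t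
          - c * d * m₁ t - c * d * m₂ t - c * (α * (D + φ t)) * m₁ t
          - c * (r₁ * m₁ t + r₂ * m₂ t) * (m₁ t + m₂ t) := by
        rw [hvdt t]; ring
      have hrhs : A - ϑ * v t
          = A - ϑ * (g * s t) - ϑ * (c * m₁ t) - ϑ * (c * m₂ t) := by
        rw [hvt t]; ring
      rw [hid, hrhs]
      linarith
    have hdecay := aux_decay ϑ A (1/2) hϑpos one_half_pos v vd hvder hvb
    -- choose T₀
    obtain ⟨C0, hC0⟩ : ∃ C0 : ℝ, C0 = v 0 - A / ϑ := ⟨_, rfl⟩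
    obtain ⟨T₀, hT₀⟩ : ∃ T₀ : ℝ, T₀ = max 1 (Real.log (2 * |C0| + 1) / ϑ) := ⟨_, rfl⟩
    have hT₀1 : (1:ℝ) ≤ T₀ := hT₀ ▸ le_max_left _ _
    have hT₀0 : (0:ℝ) < T₀ := lt_of_lt_of_le one_pos hT₀1
    have hexp_small : ∀ t : ℝ, T₀ ≤ t → C0 * Real.exp (-ϑ * t) ≤ 1/2 := by
      intro t htT
      have hP : (0:ℝ) < 2 * |C0| + 1 := by positivity
      have hlog : Real.log (2 * |C0| + 1) ≤ ϑ * t := by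
        have h1 : Real.log (2 * |C0| + 1) / ϑ ≤ t := le_trans (hT₀ ▸ le_max_right _ _) htT
        calc Real.log (2 * |C0| + 1) = Real.log (2 * |C0| + 1) / ϑ * ϑ := by
              field_simp
          _ ≤ t * ϑ := mul_le_mul_of_nonneg_right h1 hϑpos.le
          _ = ϑ * t := by ring
      have hee : Real.exp (-ϑ * t) ≤ (2 * |C0| + 1)⁻¹ := by
        rw [← Real.exp_log hP, ← Real.exp_neg]
        exact Real.exp_le_exp.2 (by linarith)
      have hC0abs : C0 ≤ |C0| := le_abs_self C0
      have hinv : (0:ℝ) < (2 * |C0| + 1)⁻¹ := by positivity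
      calc C0 * Real.exp (-ϑ * t) ≤ |C0| * Real.exp (-ϑ * t) :=
            mul_le_mul_of_nonneg_right hC0abs (Real.exp_pos _).le
        _ ≤ |C0| * (2 * |C0| + 1)⁻¹ := mul_le_mul_of_nonneg_left hee (abs_nonneg _)
        _ ≤ 1/2 := by
            rw [mul_inv_le_iff₀ hP]
            have := abs_nonneg C0
            linarith
    have hM : ∀ t : ℝ, T₀ ≤ t → c * (m₁ t + m₂ t) ≤ K := by
      intro t htT
      have ht0 : (0:ℝ) ≤ t := le_trans hT₀0.le htT
      have h1 := hdecay t ht0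
      rw [← hC0] at h1
      have h2 := hexp_small t htT
      have hst := (hnn t ht0).1
      have h3 : c * (m₁ t + m₂ t) ≤ v t := by
        rw [hvt t]
        have : 0 ≤ g * s t := mul_nonneg hg.le hst
        linarith
      rw [hKA]
      linarith
    -- s' is at least δ whenever s ≤ η/2, after T₀
    obtain ⟨sd, hsdt⟩ : ∃ sd : ℝ → ℝ, ∀ t, sd t =
        (D + φ t) * (sIn - α * s t) - c * μ (s t) * (m₁ t + m₂ t) + r * d * m₁ t :=
      ⟨_, fun _ => rfl⟩
    have hsder : ∀ t ∈ Ici (0:ℝ), HasDerivWithinAt s (sd t) (Ici 0) t := by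
      intro t ht
      rw [hsdt t]
      exact (hode t ht).1
    have hslow : ∀ t : ℝ, T₀ ≤ t → s t ≤ η/2 → δ ≤ sd t := by
      intro t htT hsle
      have ht0 : (0:ℝ) ≤ t := le_trans hT₀0.le htT
      obtain ⟨hs0, hm10, hm20⟩ := hnn t ht0
      obtain ⟨hφ1, hφ2⟩ := hφm t ht0
      have hμs : 0 ≤ μ (s t) := hμnn _ hs0
      have hMt := hM t htT
      have hfst : α * (D + a) * s t + μ (s t) * K < δ := hkey (s t) hs0 hsle
      have hdil : (D - a) * sIn - α * (D + a) * s t ≤ (D + φ t) * (sIn - α * s t) := by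
        rcases le_or_gt 0 (sIn - α * s t) with h | h
        · have h1 := mul_le_mul_of_nonneg_right (show D - a ≤ D + φ t by linarith) h
          have h2 : 0 ≤ a * (α * s t) := mul_nonneg ha.le (mul_nonneg hα.le hs0)
          nlinarith
        · have h1 := mul_le_mul_of_nonpos_right (show D + φ t ≤ D + a by linarith) h.le
          have h2 : 0 < a * sIn := mul_pos ha hsIn
          nlinarith
      have hcons : c * μ (s t) * (m₁ t + m₂ t) ≤ μ (s t) * K := by
        calc c * μ (s t) * (m₁ t + m₂ t) = μ (s t) * (c * (m₁ t + m₂ t)) := by ring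
          _ ≤ μ (s t) * K := mul_le_mul_of_nonneg_left hMt hμs
      have hrd : 0 ≤ r * d * m₁ t := by positivity
      rw [hsdt t, hδ]
      rw [hδ] at hfst
      linarith
    -- continuity of s on Ici 0
    have hscont : ContinuousOn s (Ici 0) := fun t ht => (hsder t ht).continuousWithinAt
    -- reach η/2
    obtain ⟨T₁, hT₁⟩ : ∃ T₁ : ℝ, T₁ = T₀ + 2 * (η/2) / δ + 1 := ⟨_, rfl⟩
    have hquot : 0 ≤ 2 * (η/2) / δ := by positivity
    have hT₀T₁ : T₀ ≤ T₁ := by rw [hT₁]; linarith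
    have hreach : ∃ t₁, T₀ ≤ t₁ ∧ t₁ ≤ T₁ ∧ η/2 ≤ s t₁ := by
      by_contra hcon
      push_neg at hcon
      have hall : ∀ t ∈ Icc T₀ T₁, s t < η/2 := fun t ht => hcon t ht.1 ht.2
      have hgrow := aux_grow s sd T₀ T₁ δ hT₀T₁ hδpos
        (hscont.mono (Icc_subset_Ici_self.trans (Ici_subset_Ici.mpr hT₀0.le)))
        (fun x hx => (hsder x (le_trans hT₀0.le hx.1)).mono (Ici_subset_Ici.mpr (le_trans hT₀0.le hx.1)))
        (fun x hx => hslow x hx.1 (hall x ⟨hx.1, hx.2.le⟩).le)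
      have hsT₀ : 0 ≤ s T₀ := (hnn T₀ hT₀0.le).1
      have hT₁lt := hall T₁ ⟨hT₀T₁, le_rfl⟩
      have hgap : η/2 ≤ δ/2 * (T₁ - T₀) := by
        have h2 : T₁ - T₀ = 2 * (η/2) / δ + 1 := by rw [hT₁]; ring
        rw [h2]
        have h1 : δ/2 * (2 * (η/2) / δ + 1) = η/2 + δ/2 := by
          field_simp
        rw [h1]
        linarith
      linarith
    obtain ⟨t₁, ht₁T₀, ht₁T₁, ht₁s⟩ := hreach
    have ht₁0 : (0:ℝ) ≤ t₁ := le_trans hT₀0.le ht₁T₀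
    -- stay above η/2
    have hstay := aux_stay s sd t₁ (η/2) δ hδpos
      (hscont.mono (Ici_subset_Ici.mpr ht₁0))
      (fun x hx => (hsder x (le_trans ht₁0 hx)).mono (Ici_subset_Ici.mpr (le_trans ht₁0 hx)))
      (fun x hx hxle => hslow x (le_trans ht₁T₀ hx) hxle)
      ht₁s
    refine ⟨T₁, by linarith, fun t ht => hstay t (le_trans ht₁T₁ ht)⟩
end
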